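/- arXiv:2201.00176 — 5 statements merged into one kernel-verified Lean document; each statement's English description precedes it below -/
import Mathlib

section
/- Let m,n ≥ 3, let Λ be the m×n torus lattice, and let J^x = (J^x_p ≥ 0 : p ∈ F), J^z = (J^z_s ≥ 0 : s ∈ V) be nonnegative couplings. Let Q be any matrix indexed by Ω that is diagonal in the σ⁽³⁾ product basis, say with diagonal entries Q|σ⟩ = q(σ)|σ⟩ for σ ∈ Ω. Then the toric code equilibrium expectation equals the four-body Ising expectation: ⟨Q⟩ = E_{J^z}[q(σ)]. In particular, ⟨Q⟩ does not depend on J^x. -/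
open scoped BigOperators

namespace Toric

/-- Vertices of the `m × n` torus lattice. Faces are also indexed by `Vtx`
(the face `p` is the unit square whose lower-left corner is `p`). -/
abbrev Vtx (m n : ℕ) := ZMod m × ZMod n

/-- Edges of the torus: `(s, true)` is the horizontal edge from `s` to its right
neighbour, `(s, false)` the vertical edge from `s` to its upper neighbour. -/
abbrev Edge (m n : ℕ) := Vtx m n × Bool

variable (m n : ℕ)

/-- The four edges incident to the vertex `s`, in a fixed order:
right, up, left, down. -/
def star (s : Vtx m n) : Fin 4 → Edge m n :=
  ![(s, true), (s, false), ((s.1 - 1, s.2), true), ((s.1, s.2 - 1), false)]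

/-- The four edges bounding the face `p`, in a fixed order:
bottom, left, top, right. -/
def faceEdge (p : Vtx m n) : Fin 4 → Edge m n :=
  ![(p, true), (p, false), ((p.1, p.2 + 1), true), ((p.1 + 1, p.2), false)]

/-- The set of the four edges incident to the vertex `s` (written `e ∼ s`). -/
def starSet (s : Vtx m n) : Finset (Edge m n) := Finset.univ.image (star m n s)

/-- The set of the four edges bounding the face `p` (written `e ∼ p`). -/
def faceSet (p : Vtx m n) : Finset (Edge m n) := Finset.univ.image (faceEdge m n p)

/-- Arrow configurations: each edge points right/up (`true`) or left/down (`false`). -/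
abbrev AConf (m n : ℕ) := Edge m n → Bool

/-- Which of the four edges at `s` are incoming (point towards `s`). -/
def incVec (d : AConf m n) (s : Vtx m n) : Fin 4 → Bool :=
  ![!d (star m n s 0), !d (star m n s 1), d (star m n s 2), d (star m n s 3)]

/-- Eight-vertex condition: every vertex has an even number of incoming arrows. -/
def IsEightVertex (d : AConf m n) : Prop :=
  ∀ s : Vtx m n, Even (Finset.univ.filter (fun i => incVec m n d s i = true)).card

/-- A local vertex type `η : Fin 4 → Bool` (arrow directions of the four incident
edges, in the order right, up, left, down) is one of the eight allowed vertex types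
I–VIII iff the number of incoming arrows is even. -/
def IsVertexType (η : Fin 4 → Bool) : Prop :=
  Even (Finset.univ.filter
    (fun i => (![!η 0, !η 1, η 2, η 3] : Fin 4 → Bool) i = true)).card

/-- The event `A^η_C` that every vertex of `C` exhibits the type `η` or its
total reversal. -/
def EventA (η : Fin 4 → Bool) (C : Finset (Vtx m n)) (d : AConf m n) : Prop :=
  ∀ s ∈ C, (∀ i, d (star m n s i) = η i) ∨ (∀ i, d (star m n s i) = !η i)

/-- The event `A^{η,ν}_C` that every vertex of `C` exhibits the type `η` or `ν`
or one of their total reversals. -/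
def EventA2 (η ν : Fin 4 → Bool) (C : Finset (Vtx m n)) (d : AConf m n) : Prop :=
  ∀ s ∈ C, (∀ i, d (star m n s i) = η i) ∨ (∀ i, d (star m n s i) = !η i) ∨
    (∀ i, d (star m n s i) = ν i) ∨ (∀ i, d (star m n s i) = !ν i)

/-- A non-contractible cycle of vertices of `C`: a cyclic sequence of vertices of `C`
whose consecutive vertices are nearest neighbours on the torus (with the actual
`ℤ²`-valued unit steps recorded), and whose winding number (the total displacement
in `ℤ²`) is nonzero. -/
structure NCCycle (C : Set (Vtx m n)) where
  len : ℕ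
  len_pos : 0 < len
  v : ℕ → Vtx m n
  step : ℕ → ℤ × ℤ
  mem : ∀ i < len, v i ∈ C
  unit : ∀ i < len,
    step i = (1, 0) ∨ step i = (-1, 0) ∨ step i = (0, 1) ∨ step i = (0, -1)
  succ : ∀ i < len,
    v (i + 1) = ((v i).1 + ((step i).1 : ZMod m), (v i).2 + ((step i).2 : ZMod n))
  closed : v len = v 0
  winding : ∑ i ∈ Finset.range len, step i ≠ 0

/-- Hypothesis (★): either `C` contains no non-contractible cycle, or every
non-contractible cycle in `C` has even length. -/
def StarHyp (C : Set (Vtx m n)) : Prop :=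
  IsEmpty (NCCycle m n C) ∨ ∀ γ : NCCycle m n C, Even γ.len

section torusProb
variable [NeZero m] [NeZero n]

/-- The set `Δ_8vx` of eight-vertex configurations on the torus. -/
noncomputable def Δ8 : Finset (AConf m n) :=
  haveI := Classical.decPred (IsEightVertex m n)
  Finset.univ.filter (IsEightVertex m n)

/-- The uniform eight-vertex probability measure `μ`. -/
noncomputable def prob (P : AConf m n → Prop) : ℝ :=
  haveI := Classical.decPred P
  (((Δ8 m n).filter P).card : ℝ) / ((Δ8 m n).card : ℝ)

end torusProb

/-- Spin configurations `Ω = {-1,+1}^E`. -/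
abbrev SConf (m n : ℕ) := Edge m n → ℤˣ

section matrices
variable [NeZero m] [NeZero n]

/-- Real matrices indexed by the spin configurations (i.e. operators expressed in
the `σ³` product basis). -/
abbrev Mat (m n : ℕ) [NeZero m] [NeZero n] := Matrix (SConf m n) (SConf m n) ℝ

/-- The spin configuration `x^p`, equal to `-1` exactly on the edges of the face `p`. -/
def xconf (p : Vtx m n) : SConf m n := fun e => if e ∈ faceSet m n p then -1 else 1

/-- The spin configuration equal to `-1` exactly on the edges of a set `A`. -/
def aconf (A : Finset (Edge m n)) : SConf m n := fun e => if e ∈ A then -1 else 1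

/-- The plaquette operator `X_p = ∏_{e ∼ p} σ¹_e`: the permutation matrix flipping
the spins on the four edges of `p`. -/
def X (p : Vtx m n) : Mat m n := fun τ ω => if τ = xconf m n p * ω then 1 else 0

/-- `X_A = ∏_{e ∈ A} σ¹_e`: the permutation matrix flipping the spins on `A`. -/
def XA (A : Finset (Edge m n)) : Mat m n := fun τ ω => if τ = aconf m n A * ω then 1 else 0

/-- The product `∏_{p ∈ C} X_p` of plaquette operators: the permutation matrix
flipping the spins around all faces of `C`. -/
def XProd (C : Finset (Vtx m n)) : Mat m n :=
  fun τ ω => if τ = (∏ p ∈ C, xconf m n p) * ω then 1 else 0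

/-- The star operator `Z_s = ∏_{e ∼ s} σ³_e` (a diagonal matrix). -/
def Z (s : Vtx m n) : Mat m n :=
  Matrix.diagonal fun ω => (((∏ e ∈ starSet m n s, ω e : ℤˣ) : ℤ) : ℝ)

/-- `Z_A = ∏_{e ∈ A} σ³_e` (a diagonal matrix). -/
def ZA (A : Finset (Edge m n)) : Mat m n :=
  Matrix.diagonal fun ω => (((∏ e ∈ A, ω e : ℤˣ) : ℤ) : ℝ)

/-- The product `∏_{s ∈ D} Z_s` of star operators (a diagonal matrix). -/
def ZProd (D : Finset (Vtx m n)) : Mat m n :=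
  Matrix.diagonal fun ω => (((∏ s ∈ D, ∏ e ∈ starSet m n s, ω e : ℤˣ) : ℤ) : ℝ)

/-- The toric code Hamiltonian `H = -∑_p Jˣ_p X_p - ∑_s Jᶻ_s Z_s`. -/
noncomputable def H (Jx Jz : Vtx m n → ℝ) : Mat m n :=
  -∑ p : Vtx m n, Jx p • X m n p - ∑ s : Vtx m n, Jz s • Z m n s

/-- Matrix exponential. -/
noncomputable def mexp (A : Mat m n) : Mat m n := NormedSpace.exp A

/-- The equilibrium state `⟨A⟩ = tr(A e^{-H}) / tr(e^{-H})`. -/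
noncomputable def gibbs (Jx Jz : Vtx m n → ℝ) (A : Mat m n) : ℝ :=
  (A * mexp m n (-H m n Jx Jz)).trace / (mexp m n (-H m n Jx Jz)).trace

end matrices

/-- The scalar `I^ε_s(σ) = (1/16) ∏_{i=1}^4 (1 + ε_i σ_i(s))`. -/
noncomputable def Ifun (ε : Fin 4 → ℤˣ) (s : Vtx m n) (σ : SConf m n) : ℝ :=
  (1 / 16 : ℝ) * ∏ i : Fin 4, (1 + ((ε i : ℤ) : ℝ) * ((σ (star m n s i) : ℤ) : ℝ))

/-- The scalar `Ī^ε_s(σ) = (1/16) ∏_{i=1}^4 (1 - ε_i σ_i(s))`. -/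
noncomputable def Ibar (ε : Fin 4 → ℤˣ) (s : Vtx m n) (σ : SConf m n) : ℝ :=
  (1 / 16 : ℝ) * ∏ i : Fin 4, (1 - ((ε i : ℤ) : ℝ) * ((σ (star m n s i) : ℤ) : ℝ))

/-- `I^ε_C(σ) = ∏_{s ∈ C} (I^ε_s(σ) + Ī^ε_s(σ))`: the indicator that around every
vertex of `C` the spins all agree with `ε` or are all opposite. -/
noncomputable def IC (ε : Fin 4 → ℤˣ) (C : Finset (Vtx m n)) (σ : SConf m n) : ℝ :=
  ∏ s ∈ C, (Ifun m n ε s σ + Ibar m n ε s σ)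

/-- `I^{ε,δ}_C(σ) = ∏_{s ∈ C} (I^ε_s(σ) + Ī^ε_s(σ) + I^δ_s(σ) + Ī^δ_s(σ))`. -/
noncomputable def IC2 (ε δ : Fin 4 → ℤˣ) (C : Finset (Vtx m n)) (σ : SConf m n) : ℝ :=
  ∏ s ∈ C, (Ifun m n ε s σ + Ibar m n ε s σ + Ifun m n δ s σ + Ibar m n δ s σ)

section matrices2
variable [NeZero m] [NeZero n]

/-- The (diagonal) operator `Q^ε_C = ∏_{s ∈ C} (P^ε_s + P̄^ε_s)`, where
`P^ε_s = (1/16) ∏_i (1 + ε_i σ³_i(s))` and `P̄^ε_s = (1/16) ∏_i (1 - ε_i σ³_i(s))`. -/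
noncomputable def Q (ε : Fin 4 → ℤˣ) (C : Finset (Vtx m n)) : Mat m n :=
  Matrix.diagonal (IC m n ε C)

/-- The (diagonal) operator `Q^{ε,δ}_C = ∏_{s ∈ C} (P^ε_s + P̄^ε_s + P^δ_s + P̄^δ_s)`. -/
noncomputable def Q2 (ε δ : Fin 4 → ℤˣ) (C : Finset (Vtx m n)) : Mat m n :=
  Matrix.diagonal (IC2 m n ε δ C)

/-- Expectation `E_J[f]` under the four-body Ising measure
`P_J(σ) ∝ exp(∑_s J_s ∏_{e ∼ s} σ_e)`. -/
noncomputable def isingE (J : Vtx m n → ℝ) (f : SConf m n → ℝ) : ℝ :=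
  (∑ σ : SConf m n, f σ *
      Real.exp (∑ s : Vtx m n, J s * (((∏ e ∈ starSet m n s, σ e : ℤˣ) : ℤ) : ℝ))) /
    (∑ σ : SConf m n,
      Real.exp (∑ s : Vtx m n, J s * (((∏ e ∈ starSet m n s, σ e : ℤˣ) : ℤ) : ℝ)))

end matrices2

end Toric

section Aux
namespace ToricAux

variable {m n : ℕ}

lemma star0 (s : Toric.Vtx m n) : Toric.star m n s 0 = (s, true) := rfl
lemma star1 (s : Toric.Vtx m n) : Toric.star m n s 1 = (s, false) := rfl
lemma star2 (s : Toric.Vtx m n) : Toric.star m n s 2 = ((s.1 - 1, s.2), true) := rfl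
lemma star3 (s : Toric.Vtx m n) : Toric.star m n s 3 = ((s.1, s.2 - 1), false) := rfl

lemma starInj (hm : 3 ≤ m) (hn : 3 ≤ n) (s : Toric.Vtx m n) :
    Function.Injective (Toric.star m n s) := by
  haveI : Fact (1 < m) := ⟨by omega⟩
  haveI : Fact (1 < n) := ⟨by omega⟩
  have h1m : (1 : ZMod m) ≠ 0 := one_ne_zero
  have h1n : (1 : ZMod n) ≠ 0 := one_ne_zero
  have hms : ¬ s.1 = s.1 - 1 := fun h => h1m (by linear_combination h)
  have hns : ¬ s.2 = s.2 - 1 := fun h => h1n (by linear_combination h)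
  intro i j hij
  fin_cases i <;> fin_cases j <;>
    simp_all [star0, star1, star2, star3, Prod.ext_iff]

lemma mem_faceSet {p : Toric.Vtx m n} {e : Toric.Edge m n} :
    e ∈ Toric.faceSet m n p ↔
      e = (p, true) ∨ e = (p, false) ∨ e = ((p.1, p.2 + 1), true) ∨ e = ((p.1 + 1, p.2), false) := by
  simp only [Toric.faceSet, Finset.mem_image, Finset.mem_univ, true_and]
  constructor
  · rintro ⟨i, rfl⟩
    fin_cases i
    · exact Or.inl rfl
    · exact Or.inr (Or.inl rfl)
    · exact Or.inr (Or.inr (Or.inl rfl))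
    · exact Or.inr (Or.inr (Or.inr rfl))
  · rintro (rfl | rfl | rfl | rfl)
    exacts [⟨0, rfl⟩, ⟨1, rfl⟩, ⟨2, rfl⟩, ⟨3, rfl⟩]

lemma zx (hm : 3 ≤ m) (hn : 3 ≤ n) (p s : Toric.Vtx m n) :
    ∏ e ∈ Toric.starSet m n s, Toric.xconf m n p e = 1 := by
  haveI : Fact (1 < m) := ⟨by omega⟩
  haveI : Fact (1 < n) := ⟨by omega⟩
  have h1m : (1 : ZMod m) ≠ 0 := one_ne_zero
  have h1n : (1 : ZMod n) ≠ 0 := one_ne_zero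
  rw [Toric.starSet, Finset.prod_image (fun x _ y _ h => starInj hm hn s h)]
  rw [Fin.prod_univ_four]
  obtain ⟨s1, s2⟩ := s
  obtain ⟨p1, p2⟩ := p
  have hmx : ¬(s1 = p1 ∧ s1 = p1 + 1) := by
    rintro ⟨rfl, h⟩; exact h1m (by linear_combination -h)
  have hnx : ¬(s2 = p2 ∧ s2 = p2 + 1) := by
    rintro ⟨rfl, h⟩; exact h1n (by linear_combination -h)
  simp only [Toric.xconf, star0, star1, star2, star3, mem_faceSet, Prod.ext_iff,
    sub_eq_iff_eq_add]
  have main : ∀ (h3 : s2 = p2 ∨ ¬ s2 = p2), True := fun _ => trivial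
  rcases em (s1 = p1) with h1 | h1
  · have h2 : ¬s1 = p1 + 1 := fun h => hmx ⟨h1, h⟩
    rcases em (s2 = p2) with h3 | h3
    · have h4 : ¬s2 = p2 + 1 := fun h => hnx ⟨h3, h⟩
      simp [h1, h2, h3, h4]
    · rcases em (s2 = p2 + 1) with h4 | h4 <;> simp [h1, h2, h3, h4]
  · rcases em (s1 = p1 + 1) with h2 | h2 <;>
      [skip; skip] <;>
      (rcases em (s2 = p2) with h3 | h3
       · have h4 : ¬s2 = p2 + 1 := fun h => hnx ⟨h3, h⟩
         simp [h1, h2, h3, h4]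
       · rcases em (s2 = p2 + 1) with h4 | h4 <;> simp [h1, h2, h3, h4])

end ToricAux
end Aux

section Aux2
namespace ToricAux

variable {m n : ℕ} [NeZero m] [NeZero n]

noncomputable def Amat (m n : ℕ) [NeZero m] [NeZero n] (Jx : Toric.Vtx m n → ℝ) : Toric.Mat m n :=
  ∑ p : Toric.Vtx m n, Jx p • Toric.X m n p

noncomputable def dfun (m n : ℕ) [NeZero m] [NeZero n] (Jz : Toric.Vtx m n → ℝ)
    (ω : Toric.SConf m n) : ℝ :=
  ∑ s : Toric.Vtx m n, Jz s * (((∏ e ∈ Toric.starSet m n s, ω e : ℤˣ) : ℤ) : ℝ)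

lemma A_apply (Jx : Toric.Vtx m n → ℝ) (σ τ : Toric.SConf m n) :
    Amat m n Jx σ τ =
      ∑ p : Toric.Vtx m n, Jx p * (if σ = Toric.xconf m n p * τ then 1 else 0) := by
  simp [Amat, Matrix.sum_apply, Toric.X, Matrix.smul_apply, smul_eq_mul]

lemma A_nonneg (Jx : Toric.Vtx m n → ℝ) (hJx : ∀ p, 0 ≤ Jx p) (σ τ : Toric.SConf m n) :
    0 ≤ Amat m n Jx σ τ := by
  rw [A_apply]
  refine Finset.sum_nonneg fun p _ => mul_nonneg (hJx p) ?_
  split <;> norm_num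

omit [NeZero m] [NeZero n] in
lemma conf_mul_self (g : Toric.SConf m n) : g * g = 1 :=
  funext fun e => Int.units_mul_self (g e)

lemma A_inv (Jx : Toric.Vtx m n → ℝ) (g σ τ : Toric.SConf m n) :
    Amat m n Jx (g * σ) (g * τ) = Amat m n Jx σ τ := by
  rw [A_apply, A_apply]
  refine Finset.sum_congr rfl fun p _ => ?_
  congr 1
  have : Toric.xconf m n p * (g * τ) = g * (Toric.xconf m n p * τ) := mul_left_comm _ _ _
  rw [this]
  simp [mul_right_inj]

lemma pow_inv (Jx : Toric.Vtx m n → ℝ) (k : ℕ) (g σ τ : Toric.SConf m n) :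
    (Amat m n Jx ^ k) (g * σ) (g * τ) = (Amat m n Jx ^ k) σ τ := by
  induction k generalizing σ τ with
  | zero =>
    simp only [pow_zero]
    by_cases h : σ = τ
    · subst h; simp [Matrix.one_apply]
    · rw [Matrix.one_apply_ne (fun hc => h (mul_left_cancel hc)), Matrix.one_apply_ne h]
  | succ k ih =>
    rw [pow_succ, Matrix.mul_apply, Matrix.mul_apply]
    refine Fintype.sum_equiv (Equiv.mulLeft g) _ _ fun ρ => ?_
    have hg : g * (g * ρ) = ρ := by rw [← mul_assoc, conf_mul_self, one_mul]
    have h1 := ih σ (g * ρ)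
    have h2 := A_inv Jx g (g * ρ) τ
    rw [hg] at h1 h2
    simp only [Equiv.coe_mulLeft]
    rw [h1, h2]

lemma pow_nonneg_entry (Jx : Toric.Vtx m n → ℝ) (hJx : ∀ p, 0 ≤ Jx p) (k : ℕ)
    (σ τ : Toric.SConf m n) : 0 ≤ (Amat m n Jx ^ k) σ τ := by
  induction k generalizing σ τ with
  | zero => simp only [pow_zero, Matrix.one_apply]; split <;> norm_num
  | succ k ih =>
    rw [pow_succ, Matrix.mul_apply]
    exact Finset.sum_nonneg fun ρ _ => mul_nonneg (ih _ _) (A_nonneg Jx hJx _ _)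

end ToricAux
end Aux2

section Aux3
namespace ToricAux

open NormedSpace

variable {m n : ℕ} [NeZero m] [NeZero n]

lemma hasSum_exp_entry {N : Type*} [Fintype N] [DecidableEq N] (A : Matrix N N ℝ) (i j : N) :
    HasSum (fun k : ℕ => ((Nat.factorial k : ℝ))⁻¹ * (A ^ k) i j) (NormedSpace.exp A i j) := by
  letI : SeminormedRing (Matrix N N ℝ) := Matrix.linftyOpSemiNormedRing
  letI : NormedRing (Matrix N N ℝ) := Matrix.linftyOpNormedRing
  letI : NormedAlgebra ℝ (Matrix N N ℝ) := Matrix.linftyOpNormedAlgebra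
  have hs : Summable (fun k : ℕ => ((Nat.factorial k : ℝ))⁻¹ • A ^ k) :=
    NormedSpace.expSeries_summable' (𝕂 := ℝ) A
  have hcont : Continuous (fun M : Matrix N N ℝ => M i j) := by
    exact continuous_id.matrix_elem i j
  have hmap := hs.hasSum.map (AddMonoidHom.mk' (fun M : Matrix N N ℝ => M i j)
    (fun _ _ => rfl)) hcont
  rw [NormedSpace.exp_eq_tsum ℝ]
  exact hmap

lemma exp_entry_inv (Jx : Toric.Vtx m n → ℝ) (g σ τ : Toric.SConf m n) :
    NormedSpace.exp (Amat m n Jx) (g * σ) (g * τ) = NormedSpace.exp (Amat m n Jx) σ τ := by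
  have h1 := hasSum_exp_entry (Amat m n Jx) (g * σ) (g * τ)
  have h2 := hasSum_exp_entry (Amat m n Jx) σ τ
  have : (fun k : ℕ => ((Nat.factorial k : ℝ))⁻¹ * (Amat m n Jx ^ k) (g * σ) (g * τ)) =
      fun k : ℕ => ((Nat.factorial k : ℝ))⁻¹ * (Amat m n Jx ^ k) σ τ := by
    funext k; rw [pow_inv]
  rw [this] at h1
  exact h1.unique h2

lemma exp_diag_const (Jx : Toric.Vtx m n → ℝ) (σ : Toric.SConf m n) :
    NormedSpace.exp (Amat m n Jx) σ σ = NormedSpace.exp (Amat m n Jx) 1 1 := by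
  have := exp_entry_inv Jx σ σ σ
  rw [conf_mul_self] at this
  exact this.symm

lemma one_le_exp_entry (Jx : Toric.Vtx m n → ℝ) (hJx : ∀ p, 0 ≤ Jx p) :
    (1 : ℝ) ≤ NormedSpace.exp (Amat m n Jx) 1 1 := by
  have h := hasSum_exp_entry (Amat m n Jx) (1 : Toric.SConf m n) 1
  have h0 : ((Nat.factorial 0 : ℝ))⁻¹ * (Amat m n Jx ^ 0) 1 1 = 1 := by
    simp [Matrix.one_apply]
  calc (1 : ℝ) = ((Nat.factorial 0 : ℝ))⁻¹ * (Amat m n Jx ^ 0) 1 1 := h0.symm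
    _ ≤ _ := le_hasSum h 0 fun k _ => by
        exact mul_nonneg (by positivity) (pow_nonneg_entry Jx hJx k _ _)

end ToricAux
end Aux3

section Aux4
namespace ToricAux

variable {m n : ℕ} [NeZero m] [NeZero n]

lemma dinv (hm : 3 ≤ m) (hn : 3 ≤ n) (Jz : Toric.Vtx m n → ℝ) (p : Toric.Vtx m n)
    (τ : Toric.SConf m n) :
    dfun m n Jz (Toric.xconf m n p * τ) = dfun m n Jz τ := by
  unfold dfun
  refine Finset.sum_congr rfl fun s _ => ?_
  have hprod : (∏ e ∈ Toric.starSet m n s, (Toric.xconf m n p * τ) e) =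
      ∏ e ∈ Toric.starSet m n s, τ e := by
    simp only [Pi.mul_apply]
    rw [Finset.prod_mul_distrib, zx hm hn p s, one_mul]
  rw [hprod]

lemma hD (Jz : Toric.Vtx m n → ℝ) :
    (∑ s : Toric.Vtx m n, Jz s • Toric.Z m n s) = Matrix.diagonal (dfun m n Jz) := by
  ext σ τ
  simp only [Matrix.sum_apply, Matrix.smul_apply, Toric.Z, Matrix.diagonal_apply, dfun]
  by_cases h : σ = τ
  · subst h
    simp [smul_eq_mul]
  · simp [h]

lemma commuteAD (hm : 3 ≤ m) (hn : 3 ≤ n) (Jx Jz : Toric.Vtx m n → ℝ) :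
    Commute (Amat m n Jx) (Matrix.diagonal (dfun m n Jz)) := by
  show Amat m n Jx * Matrix.diagonal (dfun m n Jz)
      = Matrix.diagonal (dfun m n Jz) * Amat m n Jx
  ext σ τ
  rw [Matrix.mul_diagonal, Matrix.diagonal_mul, A_apply, Finset.sum_mul, Finset.mul_sum]
  refine Finset.sum_congr rfl fun p _ => ?_
  by_cases h : σ = Toric.xconf m n p * τ
  · rw [if_pos h, h, dinv hm hn]
    ring
  · rw [if_neg h]
    ring

end ToricAux
end Aux4


/-- For any observable `Q` diagonal in the `σ³` product basis with
diagonal entries `q`, the toric code equilibrium expectation equals the four-body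
Ising expectation: `⟨Q⟩ = E_{Jᶻ}[q]`; in particular it does not depend on `Jˣ`. -/
theorem toric_code_diagonal_is_ising (m n : ℕ) [NeZero m] [NeZero n]
    (hm : 3 ≤ m) (hn : 3 ≤ n)
    (Jx Jz : Toric.Vtx m n → ℝ) (hJx : ∀ p, 0 ≤ Jx p) (hJz : ∀ s, 0 ≤ Jz s)
    (q : Toric.SConf m n → ℝ) :
    Toric.gibbs m n Jx Jz (Matrix.diagonal q) = Toric.isingE m n Jz q := by
  classical
  set A := ToricAux.Amat m n Jx with hAdef
  set d := ToricAux.dfun m n Jz with hddef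
  set ed : Toric.SConf m n → ℝ := fun σ => Real.exp (d σ) with heddef
  have hH : -Toric.H m n Jx Jz = A + Matrix.diagonal d := by
    simp only [Toric.H, hAdef, ToricAux.Amat, hddef]
    rw [ToricAux.hD]
    abel
  have hexp : Toric.mexp m n (-Toric.H m n Jx Jz) =
      NormedSpace.exp A * Matrix.diagonal ed := by
    simp only [Toric.mexp]
    rw [hH, Matrix.exp_add_of_commute A _ (ToricAux.commuteAD hm hn Jx Jz),
      Matrix.exp_diagonal]
    have hfun : NormedSpace.exp (ToricAux.dfun m n Jz) = ed := by
      funext σ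
      rw [Pi.coe_exp, ← Real.exp_eq_exp_ℝ]
    rw [hfun]
  set c := NormedSpace.exp A 1 1 with hcdef
  have hc : c ≠ 0 := by
    have := ToricAux.one_le_exp_entry Jx hJx
    rw [← hAdef, ← hcdef] at this
    linarith
  have key : ∀ f : Toric.SConf m n → ℝ,
      (Matrix.diagonal f * (NormedSpace.exp A * Matrix.diagonal ed)).trace
        = c * ∑ σ : Toric.SConf m n, f σ * ed σ := by
    intro f
    rw [Matrix.trace, Finset.mul_sum]
    refine Finset.sum_congr rfl fun σ _ => ?_
    rw [Matrix.diag_apply, Matrix.diagonal_mul, Matrix.mul_diagonal,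
      show NormedSpace.exp A σ σ = c from ToricAux.exp_diag_const Jx σ]
    ring
  have key2 : (NormedSpace.exp A * Matrix.diagonal ed).trace
      = c * ∑ σ : Toric.SConf m n, ed σ := by
    have := key (fun _ => 1)
    rw [Matrix.diagonal_one, Matrix.one_mul] at this
    simpa using this
  rw [Toric.gibbs, hexp, key, key2, mul_div_mul_left _ _ hc]
  simp only [Toric.isingE, heddef, hddef, ToricAux.dfun]
end

section
/- Let m,n ≥ 3, let Λ be the m×n torus lattice, let J^x = (J^x_p : p ∈ F) be real couplings and t > 0. Then all diagonal entries of the matrix exp(t Σ_{p∈F} J^x_p X_p) are equal, and for every σ ∈ Ω one has ⟨σ| exp(t Σ_{p∈F} J^x_p X_p) |σ⟩ = ∏_{p∈F} cosh(t J^x_p) + ∏_{p∈F} sinh(t J^x_p). -/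
open scoped BigOperators

namespace ExpXAux

open Toric

/-- exp of `r • M` for an involution `M`. -/
theorem exp_smul_involution {N : Type*} [Fintype N] [DecidableEq N]
    (M : Matrix N N ℝ) (h : M * M = 1) (r : ℝ) :
    NormedSpace.exp (r • M) = Real.cosh r • 1 + Real.sinh r • M := by
  have hsq : M ^ 2 = 1 := by rw [sq, h]
  have hpow : ∀ k : ℕ, M ^ (2 * k) = 1 := fun k => by rw [pow_mul, hsq, one_pow]
  have hpow' : ∀ k : ℕ, M ^ (2 * k + 1) = M := fun k => by rw [pow_succ, hpow, one_mul]
  have he : HasSum (fun k : ℕ => ((((2 * k).factorial : ℝ))⁻¹ • (r • M) ^ (2 * k)))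
      (Real.cosh r • (1 : Matrix N N ℝ)) := by
    have := (Real.hasSum_cosh r).smul_const (1 : Matrix N N ℝ)
    convert this using 2 with k
    rw [smul_pow, hpow, smul_smul, div_eq_mul_inv, mul_comm]
  have ho : HasSum (fun k : ℕ => ((((2 * k + 1).factorial : ℝ))⁻¹ • (r • M) ^ (2 * k + 1)))
      (Real.sinh r • M) := by
    have := (Real.hasSum_sinh r).smul_const M
    convert this using 2 with k
    rw [smul_pow, hpow', smul_smul, div_eq_mul_inv, mul_comm]
  have hs := HasSum.even_add_odd
    (f := fun nn : ℕ => ((nn.factorial : ℝ))⁻¹ • (r • M) ^ nn) he ho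
  rw [NormedSpace.exp_eq_tsum ℝ]
  exact hs.tsum_eq

variable (m n : ℕ) [NeZero m] [NeZero n]

lemma sconf_mul_self (g : SConf m n) : g * g = 1 :=
  funext fun e => Int.units_mul_self (g e)

/-- The permutation-matrix representation of the spin-flip group. -/
def Mhom : SConf m n →* Mat m n where
  toFun g := fun τ ω => if τ = g * ω then 1 else 0
  map_one' := by
    funext τ ω
    simp [Matrix.one_apply, eq_comm]
  map_mul' g h := by
    funext τ ω
    show (if τ = (g * h) * ω then (1:ℝ) else 0) = _
    show _ = ∑ ρ, (if τ = g * ρ then (1:ℝ) else 0) * (if ρ = h * ω then (1:ℝ) else 0)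
    rw [Finset.sum_eq_single (h * ω)]
    · rw [mul_assoc]
      by_cases hc : τ = g * (h * ω) <;> simp [hc]
    · intro ρ _ hρ
      simp [hρ]
    · simp

lemma X_eq (p : Vtx m n) : X m n p = Mhom m n (xconf m n p) := by
  funext τ ω
  show _ = (if τ = xconf m n p * ω then (1:ℝ) else 0)
  by_cases hc : τ = xconf m n p * ω <;> simp [X, Mhom, hc]

lemma commute_Mhom (g h : SConf m n) :
    Commute (Mhom m n g) (Mhom m n h) := by
  show _ * _ = _ * _
  rw [← map_mul, ← map_mul, mul_comm]

/-- The algebra map from the group algebra. -/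
noncomputable def Phi : MonoidAlgebra ℝ (SConf m n) →ₐ[ℝ] Mat m n :=
  MonoidAlgebra.lift ℝ (Mat m n) (SConf m n) (Mhom m n)

lemma Phi_apply (f : MonoidAlgebra ℝ (SConf m n)) (τ ω : SConf m n) :
    Phi m n f τ ω = f.coeff (τ * ω) := by
  have hiff : ∀ a : SConf m n, (τ = a * ω) ↔ (a = τ * ω) := by
    intro a
    constructor
    · intro hh
      rw [hh, mul_assoc, sconf_mul_self, mul_one]
    · intro hh
      rw [hh, mul_assoc, sconf_mul_self, mul_one]
  rw [Phi, MonoidAlgebra.lift_apply, Finsupp.sum]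
  rw [Matrix.sum_apply]
  have hterm : ∀ a ∈ f.coeff.support,
      (f.coeff a • Mhom m n a) τ ω = if a = τ * ω then f.coeff a else 0 := by
    intro a _
    rw [Matrix.smul_apply]
    show f.coeff a • (if τ = a * ω then (1:ℝ) else 0) = _
    by_cases hc : a = τ * ω
    · rw [if_pos ((hiff a).2 hc), if_pos hc, smul_eq_mul, mul_one]
    · rw [if_neg (fun hh => hc ((hiff a).1 hh)), if_neg hc, smul_eq_mul, mul_zero]
  rw [Finset.sum_congr rfl hterm, Finset.sum_ite_eq' f.coeff.support (τ * ω) (fun a => f.coeff a)]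
  by_cases hmem : τ * ω ∈ f.coeff.support
  · rw [if_pos hmem]
  · rw [if_neg hmem]
    exact (Finsupp.notMem_support_iff.1 hmem).symm

lemma Phi_single (g : SConf m n) (r : ℝ) :
    Phi m n (MonoidAlgebra.single g r) = r • Mhom m n g :=
  MonoidAlgebra.lift_single _ _ _

theorem exp_sum (s : Finset (Vtx m n)) (c : Vtx m n → ℝ) :
    NormedSpace.exp (∑ p ∈ s, c p • Mhom m n (xconf m n p)) =
      Phi m n (∏ p ∈ s,
        (MonoidAlgebra.single (xconf m n p) (Real.sinh (c p)) +
         MonoidAlgebra.single (1 : SConf m n) (Real.cosh (c p)))) := by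
  classical
  induction s using Finset.induction_on with
  | empty => simp
  | @insert a s ha ih =>
    rw [Finset.sum_insert ha, Finset.prod_insert ha]
    rw [Matrix.exp_add_of_commute _ _ ?hcomm]
    case hcomm =>
      apply Commute.sum_right
      intro p _
      exact ((commute_Mhom m n _ _).smul_left _).smul_right _
    rw [ih, exp_smul_involution _ (by rw [← map_mul, sconf_mul_self, map_one]) (c a)]
    rw [map_mul]
    congr 1
    rw [map_add, Phi_single, Phi_single, map_one, add_comm]

/-- The other face adjacent to an edge. -/
def ofc (e : Edge m n) : Vtx m n :=
  if e.2 then (e.1.1, e.1.2 - 1) else (e.1.1 - 1, e.1.2)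

lemma ofc_true (v : Vtx m n) : ofc m n (v, true) = (v.1, v.2 - 1) := rfl

lemma ofc_false (v : Vtx m n) : ofc m n (v, false) = (v.1 - 1, v.2) := rfl

lemma ofc_ne (hm1 : (1 : ZMod m) ≠ 0) (hn1 : (1 : ZMod n) ≠ 0) (e : Edge m n) :
    e.1 ≠ ofc m n e := by
  obtain ⟨⟨a, b⟩, bb⟩ := e
  cases bb
  · intro h
    rw [ofc_false] at h
    have h1 : a = a - 1 := congrArg Prod.fst h
    exact hm1 (by rwa [eq_sub_iff_add_eq, add_eq_left] at h1)
  · intro h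
    rw [ofc_true] at h
    have h1 : b = b - 1 := congrArg Prod.snd h
    exact hn1 (by rwa [eq_sub_iff_add_eq, add_eq_left] at h1)

lemma mem_faceSet (p : Vtx m n) (e : Edge m n) :
    e ∈ faceSet m n p ↔ (p = e.1 ∨ p = ofc m n e) := by
  obtain ⟨⟨a, b⟩, bb⟩ := e
  rw [faceSet, Finset.mem_image]
  constructor
  · rintro ⟨i, -, hi⟩
    fin_cases i <;> simp [faceEdge, Prod.ext_iff] at hi
    · exact Or.inl (by simp [Prod.ext_iff, hi.1])
    · exact Or.inl (by simp [Prod.ext_iff, hi.1])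
    · refine Or.inr ?_
      obtain ⟨⟨h1, h2⟩, h3⟩ := hi
      subst h3
      rw [ofc_true]
      exact Prod.ext h1 (by rw [← h2]; ring)
    · refine Or.inr ?_
      obtain ⟨⟨h1, h2⟩, h3⟩ := hi
      subst h3
      rw [ofc_false]
      exact Prod.ext (by rw [← h1]; ring) h2
  · rintro (rfl | rfl)
    · cases bb
      · exact ⟨1, Finset.mem_univ _, rfl⟩
      · exact ⟨0, Finset.mem_univ _, rfl⟩
    · cases bb
      · refine ⟨3, Finset.mem_univ _, ?_⟩
        rw [ofc_false]
        show ((a - 1 + 1, b), false) = ((a, b), false)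
        exact Prod.ext (Prod.ext (by ring) rfl) rfl
      · refine ⟨2, Finset.mem_univ _, ?_⟩
        rw [ofc_true]
        show ((a, b - 1 + 1), true) = ((a, b), true)
        exact Prod.ext (Prod.ext rfl (by ring)) rfl

lemma xconf_apply (hm1 : (1 : ZMod m) ≠ 0) (hn1 : (1 : ZMod n) ≠ 0)
    (p : Vtx m n) (e : Edge m n) :
    xconf m n p e =
      (if p = e.1 then (-1 : ℤˣ) else 1) * (if p = ofc m n e then (-1 : ℤˣ) else 1) := by
  have hne := ofc_ne m n hm1 hn1 e
  rw [xconf]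
  by_cases h1 : p = e.1 <;> by_cases h2 : p = ofc m n e
  · exact absurd (h1 ▸ h2) hne
  · rw [if_pos ((mem_faceSet m n p e).2 (Or.inl h1)), if_pos h1, if_neg h2, mul_one]
  · rw [if_pos ((mem_faceSet m n p e).2 (Or.inr h2)), if_neg h1, if_pos h2, one_mul]
  · rw [if_neg (fun hh => by rcases (mem_faceSet m n p e).1 hh with h | h <;> tauto),
      if_neg h1, if_neg h2, one_mul]

lemma prod_xconf_apply (hm1 : (1 : ZMod m) ≠ 0) (hn1 : (1 : ZMod n) ≠ 0)
    (S : Finset (Vtx m n)) (e : Edge m n) :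
    (∏ p ∈ S, xconf m n p) e =
      (if e.1 ∈ S then (-1 : ℤˣ) else 1) * (if ofc m n e ∈ S then (-1 : ℤˣ) else 1) := by
  rw [Finset.prod_apply]
  rw [Finset.prod_congr rfl (fun p _ => xconf_apply m n hm1 hn1 p e)]
  rw [Finset.prod_mul_distrib,
    Finset.prod_ite_eq' S e.1 (fun _ => (-1 : ℤˣ)),
    Finset.prod_ite_eq' S (ofc m n e) (fun _ => (-1 : ℤˣ))]

lemma prod_xconf_eq_one_iff (hm1 : (1 : ZMod m) ≠ 0) (hn1 : (1 : ZMod n) ≠ 0)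
    (S : Finset (Vtx m n)) :
    (∏ p ∈ S, xconf m n p) = 1 ↔ (S = ∅ ∨ S = Finset.univ) := by
  constructor
  · intro h
    by_cases hS : S = ∅
    · exact Or.inl hS
    right
    obtain ⟨a, ha⟩ := Finset.nonempty_iff_ne_empty.mpr hS
    have hmemb : ∀ e : Edge m n, (e.1 ∈ S ↔ ofc m n e ∈ S) := by
      intro e
      have he := congrFun h e
      rw [prod_xconf_apply m n hm1 hn1] at he
      by_cases h1 : e.1 ∈ S <;> by_cases h2 : ofc m n e ∈ S <;>
        simp [h1, h2] at he ⊢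
    have hH : ∀ v : Vtx m n, v ∈ S ↔ ((v.1, v.2 - 1) : Vtx m n) ∈ S := fun v => by
      simpa [ofc_true] using hmemb (v, true)
    have hV : ∀ v : Vtx m n, v ∈ S ↔ ((v.1 - 1, v.2) : Vtx m n) ∈ S := fun v => by
      simpa [ofc_false] using hmemb (v, false)
    have h1 : ∀ (l : ℕ) (v : Vtx m n), v ∈ S → ((v.1, v.2 - (l : ZMod n)) : Vtx m n) ∈ S := by
      intro l
      induction l with
      | zero => intro v hv; simpa using hv
      | succ i ih =>
        intro v hv
        have := (hH (v.1, v.2 - (i : ZMod n))).1 (ih v hv)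
        convert this using 2
        push_cast
        ring
    have h2 : ∀ (k : ℕ) (v : Vtx m n), v ∈ S → ((v.1 - (k : ZMod m), v.2) : Vtx m n) ∈ S := by
      intro k
      induction k with
      | zero => intro v hv; simpa using hv
      | succ i ih =>
        intro v hv
        have := (hV (v.1 - (i : ZMod m), v.2)).1 (ih v hv)
        convert this using 2
        push_cast
        ring
    rw [Finset.eq_univ_iff_forall]
    intro q
    have step1 := h1 ((a.2 - q.2).val) a ha
    have step2 := h2 ((a.1 - q.1).val) _ step1
    have e1 : (((a.1 - q.1).val : ℕ) : ZMod m) = a.1 - q.1 := ZMod.natCast_rightInverse _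
    have e2 : (((a.2 - q.2).val : ℕ) : ZMod n) = a.2 - q.2 := ZMod.natCast_rightInverse _
    simp only [e1, e2] at step2
    have : ((a.1 - (a.1 - q.1), a.2 - (a.2 - q.2)) : Vtx m n) = q := by
      rw [sub_sub_cancel, sub_sub_cancel]
    rwa [this] at step2
  · rintro (rfl | rfl)
    · simp
    · funext e
      rw [prod_xconf_apply m n hm1 hn1]
      simp

end ExpXAux

/-- All diagonal entries of `exp(t ∑_p Jˣ_p X_p)` are equal, namely
equal to `∏_p cosh(t Jˣ_p) + ∏_p sinh(t Jˣ_p)`. -/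
theorem exp_X_diagonal_entries (m n : ℕ) [NeZero m] [NeZero n]
    (hm : 3 ≤ m) (hn : 3 ≤ n)
    (Jx : Toric.Vtx m n → ℝ) (t : ℝ) (ht : 0 < t) (σ : Toric.SConf m n) :
    Toric.mexp m n (t • ∑ p : Toric.Vtx m n, Jx p • Toric.X m n p) σ σ =
      (∏ p : Toric.Vtx m n, Real.cosh (t * Jx p)) +
        ∏ p : Toric.Vtx m n, Real.sinh (t * Jx p) := by
  classical
  have hm1 : (1 : ZMod m) ≠ 0 := by
    haveI : Fact (1 < m) := ⟨by omega⟩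
    exact one_ne_zero
  have hn1 : (1 : ZMod n) ≠ 0 := by
    haveI : Fact (1 < n) := ⟨by omega⟩
    exact one_ne_zero
  open ExpXAux in
  have harg : (t • ∑ p : Toric.Vtx m n, Jx p • Toric.X m n p) =
      ∑ p : Toric.Vtx m n, (t * Jx p) • ExpXAux.Mhom m n (Toric.xconf m n p) := by
    rw [Finset.smul_sum]
    exact Finset.sum_congr rfl fun p _ => by rw [ExpXAux.X_eq, smul_smul]
  rw [Toric.mexp, harg, ExpXAux.exp_sum m n Finset.univ (fun p => t * Jx p),
    ExpXAux.Phi_apply, ExpXAux.sconf_mul_self]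
  rw [Finset.prod_add]
  simp only [MonoidAlgebra.prod_single, MonoidAlgebra.single_mul_single,
    Finset.prod_const_one, mul_one]
  rw [MonoidAlgebra.coeff_sum, Finset.sum_apply']
  simp only [MonoidAlgebra.coeff_single, Finsupp.single_apply]
  have hsub : ({∅, Finset.univ} : Finset (Finset (Toric.Vtx m n))) ⊆
      Finset.univ.powerset := fun S _ => Finset.mem_powerset.2 (Finset.subset_univ S)
  rw [← Finset.sum_subset hsub ?hvan]
  case hvan =>
    intro S _ hS2
    rw [if_neg]
    intro hone
    exact hS2 (by
      rcases (ExpXAux.prod_xconf_eq_one_iff m n hm1 hn1 S).1 hone with rfl | rfl <;>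
        simp)
  have hne : (∅ : Finset (Toric.Vtx m n)) ≠ Finset.univ := by
    have : ((0 : ZMod m), (0 : ZMod n)) ∈ (Finset.univ : Finset (Toric.Vtx m n)) :=
      Finset.mem_univ _
    intro h
    rw [← h] at this
    exact absurd this (Finset.notMem_empty _)
  rw [Finset.sum_insert (by simp [hne]), Finset.sum_singleton]
  rw [if_pos (by simp), if_pos ((ExpXAux.prod_xconf_eq_one_iff m n hm1 hn1 _).2 (Or.inr rfl))]
  simp
end

section
/- Let m,n ≥ 3, let Λ be the m×n torus lattice, let J^x = (J^x_p : p ∈ F) be real couplings and t > 0. For σ, τ ∈ Ω, the (τ,σ) entry of exp(t Σ_{p∈F} J^x_p X_p) equals Σ_C ∏_{p∈C} sinh(t J^x_p) · ∏_{p∈F∖C} cosh(t J^x_p), where the sum runs over all subsets C ⊆ F such that τ = (∏_{p∈C} x^p)·σ (componentwise product). Equivalently, exp(t Σ_{p∈F} J^x_p X_p) = ∏_{p∈F} (cosh(t J^x_p)·Id + sinh(t J^x_p)·X_p). -/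
open scoped BigOperators

namespace ToricAux

open NormedSpace Finset

variable (m n : ℕ) [NeZero m] [NeZero n]

/-- Generic permutation matrix flipping by `u`. -/
def Pm (u : Toric.SConf m n) : Toric.Mat m n := fun τ ω => if τ = u * ω then 1 else 0

lemma Pm_one : Pm m n 1 = 1 := by
  ext τ ω
  simp [Pm, Matrix.one_apply]

lemma Pm_mul (u v : Toric.SConf m n) : Pm m n u * Pm m n v = Pm m n (u * v) := by
  ext τ ω
  rw [Matrix.mul_apply, Finset.sum_eq_single (v * ω)]
  · simp [Pm, mul_assoc]
  · intro b _ hb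
    simp [Pm, hb]
  · simp

lemma X_eq_Pm (p : Toric.Vtx m n) : Toric.X m n p = Pm m n (Toric.xconf m n p) := rfl

lemma sconf_mul_self (u : Toric.SConf m n) : u * u = 1 := by
  funext e
  exact Int.units_mul_self (u e)

lemma X_mul_self (p : Toric.Vtx m n) : Toric.X m n p * Toric.X m n p = 1 := by
  rw [X_eq_Pm, Pm_mul, sconf_mul_self, Pm_one]

lemma exp_smul_idem (P : Toric.Mat m n) (h : P * P = P) (c : ℝ) :
    exp (c • P) = 1 + (Real.exp c - 1) • P := by
  letI : SeminormedRing (Toric.Mat m n) := Matrix.linftyOpSemiNormedRing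
  letI : NormedRing (Toric.Mat m n) := Matrix.linftyOpNormedRing
  letI : NormedAlgebra ℝ (Toric.Mat m n) := Matrix.linftyOpNormedAlgebra
  have hpow : ∀ k : ℕ, P ^ (k + 1) = P := by
    intro k
    induction k with
    | zero => simp
    | succ k ih => rw [pow_succ, ih, h]
  have hsum : Summable fun k : ℕ => ((Nat.factorial k : ℝ)⁻¹ : ℝ) • (c • P) ^ k :=
    expSeries_summable' (𝕂 := ℝ) (c • P)
  have hsum' : Summable fun k : ℕ => ((Nat.factorial (k + 1) : ℝ)⁻¹ * c ^ (k + 1) : ℝ) :=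
    ((expSeries_summable' (𝕂 := ℝ) c).comp_injective Nat.succ_injective).congr
      (fun k => by simp [smul_eq_mul, Function.comp])
  calc exp (c • P) = ∑' k : ℕ, ((Nat.factorial k : ℝ)⁻¹ : ℝ) • (c • P) ^ k := by
        rw [exp_eq_tsum ℝ]
    _ = 1 + ∑' k : ℕ, ((Nat.factorial (k + 1) : ℝ)⁻¹ * c ^ (k + 1)) • P := by
        rw [hsum.tsum_eq_zero_add]
        congr 1
        · simp
        · refine tsum_congr fun k => ?_
          rw [smul_pow, hpow, smul_smul]
    _ = 1 + (∑' k : ℕ, ((Nat.factorial (k + 1) : ℝ)⁻¹ * c ^ (k + 1))) • P := by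
        rw [hsum'.tsum_smul_const]
    _ = 1 + (Real.exp c - 1) • P := by
        congr 2
        have hexp : Real.exp c = ∑' k : ℕ, ((Nat.factorial k : ℝ)⁻¹ : ℝ) • c ^ k := by
          rw [Real.exp_eq_exp_ℝ, exp_eq_tsum ℝ]
        have := Summable.tsum_eq_zero_add (expSeries_summable' (𝕂 := ℝ) c)
        rw [← hexp] at this
        simp only [Nat.factorial_zero, pow_zero, Nat.cast_one, inv_one, one_smul,
          smul_eq_mul, mul_one, one_mul] at this
        linarith [this]

lemma exp_smul_invol (A : Toric.Mat m n) (h : A * A = 1) (c : ℝ) :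
    exp (c • A) = Real.cosh c • 1 + Real.sinh c • A := by
  set P : Toric.Mat m n := (2⁻¹ : ℝ) • (1 + A) with hPdef
  set Q : Toric.Mat m n := (2⁻¹ : ℝ) • (1 - A) with hQdef
  have hP : P * P = P := by
    rw [hPdef, smul_mul_smul_comm, mul_add, add_mul, add_mul]
    simp only [one_mul, mul_one]
    rw [h]
    match_scalars <;> ring
  have hQ : Q * Q = Q := by
    rw [hQdef, smul_mul_smul_comm, mul_sub, sub_mul, sub_mul]
    simp only [one_mul, mul_one]
    rw [h]
    match_scalars <;> ring
  have hPQ : P * Q = 0 := by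
    rw [hPdef, hQdef, smul_mul_smul_comm, mul_sub, add_mul, add_mul]
    simp only [one_mul, mul_one]
    rw [h]
    match_scalars <;> ring
  have hQP : Q * P = 0 := by
    rw [hPdef, hQdef, smul_mul_smul_comm, sub_mul, mul_add, mul_add]
    simp only [one_mul, mul_one]
    rw [h]
    match_scalars <;> ring
  have harg : c • A = c • P + (-c) • Q := by
    rw [hPdef, hQdef]
    match_scalars <;> ring
  have hPQcomm : Commute P Q := by
    rw [Commute, SemiconjBy, hPQ, hQP]
  have hcomm : Commute (c • P) ((-c) • Q) := (hPQcomm.smul_left c).smul_right (-c)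
  rw [harg, Matrix.exp_add_of_commute _ _ hcomm, exp_smul_idem m n P hP,
    exp_smul_idem m n Q hQ]
  rw [add_mul, one_mul, mul_add, mul_one, smul_mul_assoc, mul_smul_comm, hPQ,
    smul_zero, smul_zero, add_zero]
  rw [hPdef, hQdef, Real.cosh_eq, Real.sinh_eq]
  match_scalars <;> ring

lemma exp_sum_X (c : Toric.Vtx m n → ℝ) (S : Finset (Toric.Vtx m n)) :
    exp (∑ p ∈ S, c p • Toric.X m n p) =
      ∑ C ∈ S.powerset,
        ((∏ p ∈ C, Real.sinh (c p)) * ∏ p ∈ S \ C, Real.cosh (c p)) •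
          Pm m n (∏ p ∈ C, Toric.xconf m n p) := by
  classical
  induction S using Finset.induction_on with
  | empty => simp [Pm_one, exp_zero]
  | @insert a S ha ih =>
    have hcomm : Commute (c a • Toric.X m n a) (∑ p ∈ S, c p • Toric.X m n p) := by
      refine Commute.smul_left ?_ _
      refine Commute.sum_right _ _ _ fun p _ => ?_
      refine Commute.smul_right ?_ _
      show _ * _ = _ * _
      rw [X_eq_Pm, X_eq_Pm, Pm_mul, Pm_mul, mul_comm]
    rw [Finset.sum_insert ha, Matrix.exp_add_of_commute _ _ hcomm,
      exp_smul_invol m n _ (X_mul_self m n a), ih, Finset.sum_powerset_insert ha]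
    rw [add_mul, smul_mul_assoc, one_mul, smul_mul_assoc, Finset.mul_sum,
      Finset.smul_sum, Finset.smul_sum]
    congr 1
    · refine Finset.sum_congr rfl fun C hC => ?_
      have hCS : C ⊆ S := Finset.mem_powerset.mp hC
      have haC : a ∉ S \ C := by simp [ha]
      rw [Finset.insert_sdiff_of_notMem _ (fun h => ha (hCS h)),
        Finset.prod_insert haC, smul_smul]
      congr 1
      ring
    · refine Finset.sum_congr rfl fun C hC => ?_
      have hCS : C ⊆ S := Finset.mem_powerset.mp hC
      have haC : a ∉ C := fun h => ha (hCS h)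
      have hsd : insert a S \ insert a C = S \ C := by
        ext x
        simp only [Finset.mem_sdiff, Finset.mem_insert, not_or]
        constructor
        · rintro ⟨hx1 | hx1, hx2, hx3⟩
          · exact absurd hx1 hx2
          · exact ⟨hx1, hx3⟩
        · rintro ⟨hx1, hx2⟩
          exact ⟨Or.inr hx1, fun hxa => ha (hxa ▸ hx1), hx2⟩
      rw [mul_smul_comm, X_eq_Pm, Pm_mul, Finset.prod_insert haC, Finset.prod_insert haC,
        hsd, smul_smul]
      congr 1
      ring

end ToricAux


/-- Entrywise formula for `exp(t ∑_p Jˣ_p X_p)`: the `(τ,σ)` entry is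
`∑_{C ⊆ F, τ = (∏_{p∈C} x^p)·σ} ∏_{p∈C} sinh(t Jˣ_p) ∏_{p∉C} cosh(t Jˣ_p)`. -/
theorem exp_X_entries (m n : ℕ) [NeZero m] [NeZero n]
    (hm : 3 ≤ m) (hn : 3 ≤ n)
    (Jx : Toric.Vtx m n → ℝ) (t : ℝ) (ht : 0 < t) (σ τ : Toric.SConf m n) :
    Toric.mexp m n (t • ∑ p : Toric.Vtx m n, Jx p • Toric.X m n p) τ σ =
      ∑ C : Finset (Toric.Vtx m n),
        if τ = (∏ p ∈ C, Toric.xconf m n p) * σ then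
          (∏ p ∈ C, Real.sinh (t * Jx p)) * ∏ p ∈ Cᶜ, Real.cosh (t * Jx p)
        else 0 := by
  classical
  have harg : t • ∑ p : Toric.Vtx m n, Jx p • Toric.X m n p =
      ∑ p ∈ Finset.univ, (t * Jx p) • Toric.X m n p := by
    rw [Finset.smul_sum]
    exact Finset.sum_congr rfl fun p _ => (smul_smul t (Jx p) _)
  have h := ToricAux.exp_sum_X m n (fun p => t * Jx p) Finset.univ
  rw [Toric.mexp, harg, h, Finset.powerset_univ]
  rw [Matrix.sum_apply]
  refine Finset.sum_congr rfl fun C _ => ?_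
  have : Finset.univ \ C = Cᶜ := by
    rw [Finset.compl_eq_univ_sdiff]
  rw [this, Matrix.smul_apply]
  simp only [ToricAux.Pm, smul_eq_mul, mul_ite, mul_one, mul_zero]
end

section
/- Let m,n ≥ 3, let Λ be the m×n torus lattice, and let J^x = (J^x_p ≥ 0 : p ∈ F), J^z = (J^z_s ≥ 0 : s ∈ V) be nonnegative couplings. For any C ⊆ F, the toric code equilibrium state satisfies ⟨∏_{p∈C} X_p⟩ = (∏_{p∈F∖C} cosh(J^x_p) ∏_{p∈C} sinh(J^x_p) + ∏_{p∈F∖C} sinh(J^x_p) ∏_{p∈C} cosh(J^x_p)) / (∏_{p∈F} cosh(J^x_p) + ∏_{p∈F} sinh(J^x_p)). In particular this expectation is nonnegative. -/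
open scoped BigOperators

open Toric NormedSpace

namespace ToricCodeAux

/-! ### Exponential of an involution -/

variable {N : Type*} [Fintype N] [DecidableEq N]

/-- The ring homomorphism `ℝ × ℝ →+* Matrix N N ℝ` associated to an involution `A`,
sending `(x, y)` to `((x+y)/2) • 1 + ((x-y)/2) • A`. -/
noncomputable def invHom (A : Matrix N N ℝ) (hA : A * A = 1) : ℝ × ℝ →+* Matrix N N ℝ where
  toFun x := ((x.1 + x.2) / 2) • (1 : Matrix N N ℝ) + ((x.1 - x.2) / 2) • A
  map_one' := by
    show ((1 + 1 : ℝ) / 2) • (1 : Matrix N N ℝ) + ((1 - 1 : ℝ) / 2) • A = 1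
    norm_num
  map_mul' x y := by
    show ((x.1 * y.1 + x.2 * y.2) / 2) • (1 : Matrix N N ℝ) + ((x.1 * y.1 - x.2 * y.2) / 2) • A =
      (((x.1 + x.2) / 2) • (1 : Matrix N N ℝ) + ((x.1 - x.2) / 2) • A) *
        (((y.1 + y.2) / 2) • (1 : Matrix N N ℝ) + ((y.1 - y.2) / 2) • A)
    rw [add_mul, mul_add, mul_add]
    simp only [Matrix.smul_mul, Matrix.mul_smul, smul_smul, one_mul, mul_one, hA]
    module
  map_zero' := by
    show ((0 + 0 : ℝ) / 2) • (1 : Matrix N N ℝ) + ((0 - 0 : ℝ) / 2) • A = 0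
    norm_num
  map_add' x y := by
    show ((x.1 + y.1 + (x.2 + y.2)) / 2) • (1 : Matrix N N ℝ) +
        ((x.1 + y.1 - (x.2 + y.2)) / 2) • A = _ + _
    show _ = ((x.1 + x.2) / 2) • (1 : Matrix N N ℝ) + ((x.1 - x.2) / 2) • A +
      (((y.1 + y.2) / 2) • (1 : Matrix N N ℝ) + ((y.1 - y.2) / 2) • A)
    module

theorem exp_invol (A : Matrix N N ℝ) (hA : A * A = 1) (c : ℝ) :
    NormedSpace.exp (c • A) = Real.cosh c • (1 : Matrix N N ℝ) + Real.sinh c • A := by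
  letI : SeminormedRing (Matrix N N ℝ) := Matrix.linftyOpSemiNormedRing
  letI : NormedRing (Matrix N N ℝ) := Matrix.linftyOpNormedRing
  letI : NormedAlgebra ℝ (Matrix N N ℝ) := Matrix.linftyOpNormedAlgebra
  have hcont : Continuous (invHom A hA) := by
    show Continuous fun x : ℝ × ℝ =>
      ((x.1 + x.2) / 2) • (1 : Matrix N N ℝ) + ((x.1 - x.2) / 2) • A
    fun_prop
  have h := NormedSpace.map_exp (invHom A hA) hcont (c, -c)
  have he : NormedSpace.exp ((c, -c) : ℝ × ℝ) = (Real.exp c, Real.exp (-c)) := by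
    rw [Real.exp_eq_exp_ℝ]
    exact Prod.ext_iff.mpr ⟨Prod.fst_exp _, Prod.snd_exp _⟩
  rw [he] at h
  have h1 : invHom A hA (c, -c) = c • A := by
    show ((c + -c) / 2) • (1 : Matrix N N ℝ) + ((c - -c) / 2) • A = c • A
    have e1 : (c + -c) / 2 = 0 := by ring
    have e2 : (c - -c) / 2 = c := by ring
    rw [e1, e2, zero_smul, zero_add]
  have h2 : invHom A hA (Real.exp c, Real.exp (-c)) =
      Real.cosh c • (1 : Matrix N N ℝ) + Real.sinh c • A := by
    show ((Real.exp c + Real.exp (-c)) / 2) • (1 : Matrix N N ℝ) +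
      ((Real.exp c - Real.exp (-c)) / 2) • A = _
    rw [Real.cosh_eq, Real.sinh_eq]
  rw [h1, h2] at h
  exact h.symm

theorem commute_smul_of_commute {A B : Matrix N N ℝ} (h : Commute A B) (c d : ℝ) :
    Commute (c • A) (d • B) := by
  show (c • A) * (d • B) = (d • B) * (c • A)
  rw [Matrix.smul_mul, Matrix.mul_smul, Matrix.smul_mul, Matrix.mul_smul, h.eq,
    smul_smul, smul_smul, mul_comm d c]

/-! ### ZMod helpers -/

theorem self_ne_sub_one {k : ℕ} (hk : 3 ≤ k) (a : ZMod k) : a ≠ a - 1 := by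
  intro h
  have h1 : (1 : ZMod k) = 0 := sub_eq_self.mp h.symm
  haveI : Fact (1 < k) := ⟨by omega⟩
  exact one_ne_zero h1

variable (m n : ℕ) [NeZero m] [NeZero n]

/-! ### Permutation matrices -/

/-- The permutation matrix of multiplication by the spin configuration `g`. -/
def Pmat (g : SConf m n) : Mat m n := fun τ ω => if τ = g * ω then 1 else 0

theorem XProd_eq_Pmat (C : Finset (Vtx m n)) :
    XProd m n C = Pmat m n (∏ p ∈ C, xconf m n p) := rfl

theorem Pmat_mul (g h : SConf m n) : Pmat m n g * Pmat m n h = Pmat m n (g * h) := by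
  ext τ ω
  rw [Matrix.mul_apply]
  rw [Finset.sum_eq_single (h * ω)]
  · simp [Pmat, mul_assoc]
  · intro b _ hb
    simp [Pmat, hb]
  · simp

theorem Pmat_one : Pmat m n 1 = (1 : Mat m n) := by
  ext τ ω
  simp [Pmat, Matrix.one_apply]

theorem Pmat_sq (g : SConf m n) (hg : g * g = 1) : Pmat m n g * Pmat m n g = 1 := by
  rw [Pmat_mul, hg, Pmat_one]

theorem Pmat_commute (g h : SConf m n) : Commute (Pmat m n g) (Pmat m n h) := by
  show _ = _
  rw [Pmat_mul, Pmat_mul, mul_comm g h]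

theorem Pmat_diag_comm (g : SConf m n) (d : SConf m n → ℝ) (hd : ∀ ω, d (g * ω) = d ω) :
    Commute (Pmat m n g) (Matrix.diagonal d) := by
  show Pmat m n g * Matrix.diagonal d = Matrix.diagonal d * Pmat m n g
  ext τ ω
  rw [Matrix.mul_diagonal, Matrix.diagonal_mul]
  show (if τ = g * ω then (1:ℝ) else 0) * d ω = d τ * (if τ = g * ω then (1:ℝ) else 0)
  by_cases h : τ = g * ω
  · rw [if_pos h, one_mul, mul_one, h, hd]
  · rw [if_neg h, zero_mul, mul_zero]

theorem trace_Pmat_diagonal (g : SConf m n) (d : SConf m n → ℝ) :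
    (Pmat m n g * Matrix.diagonal d).trace = if g = 1 then ∑ τ : SConf m n, d τ else 0 := by
  by_cases hg : g = 1
  · subst hg
    rw [if_pos rfl, Matrix.trace]
    apply Finset.sum_congr rfl
    intro τ _
    rw [Matrix.diag]
    rw [Matrix.mul_diagonal]
    show (if τ = 1 * τ then (1:ℝ) else 0) * d τ = d τ
    rw [if_pos (one_mul τ).symm, one_mul]
  · rw [if_neg hg, Matrix.trace]
    apply Finset.sum_eq_zero
    intro τ _
    rw [Matrix.diag, Matrix.mul_diagonal]
    have hne : τ ≠ g * τ := by
      intro h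
      apply hg
      funext e
      have h1 : τ e = g e * τ e := congrFun h e
      have h2 : (1 : ℤˣ) * τ e = g e * τ e := by rw [one_mul]; exact h1
      exact (mul_right_cancel h2).symm
    show (if τ = g * τ then (1:ℝ) else 0) * d τ = 0
    rw [if_neg hne, zero_mul]

/-! ### `xconf` evaluation -/

theorem xconf_mul_self (p : Vtx m n) : xconf m n p * xconf m n p = 1 := by
  funext e
  exact Int.units_mul_self _

theorem faceSet_eq (p : Vtx m n) :
    faceSet m n p = {(p, true), (p, false), ((p.1, p.2 + 1), true), ((p.1 + 1, p.2), false)} := by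
  ext e
  simp only [faceSet, Finset.mem_image, Finset.mem_univ, true_and, Finset.mem_insert,
    Finset.mem_singleton]
  constructor
  · rintro ⟨i, rfl⟩
    fin_cases i <;> simp [faceEdge]
  · rintro (rfl | rfl | rfl | rfl)
    exacts [⟨0, rfl⟩, ⟨1, rfl⟩, ⟨2, rfl⟩, ⟨3, rfl⟩]

theorem mem_faceSet_true (p : Vtx m n) (a : ZMod m) (b : ZMod n) :
    (((a, b), true) : Edge m n) ∈ faceSet m n p ↔ (p = (a, b) ∨ p = (a, b - 1)) := by
  rw [faceSet_eq]
  simp only [Finset.mem_insert, Finset.mem_singleton]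
  constructor
  · rintro (h | h | h | h)
    · left
      exact ((Prod.ext_iff.mp h).1).symm
    · have hb : (true : Bool) = false := (Prod.ext_iff.mp h).2
      exact absurd hb (by decide)
    · right
      have h0 : ((a, b) : Vtx m n) = (p.1, p.2 + 1) := (Prod.ext_iff.mp h).1
      have h1 : a = p.1 := (Prod.ext_iff.mp h0).1
      have h2 : b = p.2 + 1 := (Prod.ext_iff.mp h0).2
      refine (Prod.ext_iff.mpr ⟨h1.symm, ?_⟩ : p = ((a, b - 1) : Vtx m n))
      show p.2 = b - 1
      rw [h2]
      ring
    · have hb : (true : Bool) = false := (Prod.ext_iff.mp h).2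
      exact absurd hb (by decide)
  · rintro (rfl | rfl)
    · left
      rfl
    · right; right; left
      refine Prod.ext_iff.mpr ⟨Prod.ext_iff.mpr ⟨rfl, ?_⟩, rfl⟩
      show b = b - 1 + 1
      ring

theorem mem_faceSet_false (p : Vtx m n) (a : ZMod m) (b : ZMod n) :
    (((a, b), false) : Edge m n) ∈ faceSet m n p ↔ (p = (a, b) ∨ p = (a - 1, b)) := by
  rw [faceSet_eq]
  simp only [Finset.mem_insert, Finset.mem_singleton]
  constructor
  · rintro (h | h | h | h)
    · have hb : (false : Bool) = true := (Prod.ext_iff.mp h).2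
      exact absurd hb (by decide)
    · left
      exact ((Prod.ext_iff.mp h).1).symm
    · have hb : (false : Bool) = true := (Prod.ext_iff.mp h).2
      exact absurd hb (by decide)
    · right
      have h0 : ((a, b) : Vtx m n) = (p.1 + 1, p.2) := (Prod.ext_iff.mp h).1
      have h1 : a = p.1 + 1 := (Prod.ext_iff.mp h0).1
      have h2 : b = p.2 := (Prod.ext_iff.mp h0).2
      refine (Prod.ext_iff.mpr ⟨?_, h2.symm⟩ : p = ((a - 1, b) : Vtx m n))
      show p.1 = a - 1
      rw [h1]
      ring
  · rintro (rfl | rfl)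
    · right; left
      rfl
    · right; right; right
      refine Prod.ext_iff.mpr ⟨Prod.ext_iff.mpr ⟨?_, rfl⟩, rfl⟩
      show a = a - 1 + 1
      ring

theorem xconf_true (hn : 3 ≤ n) (p : Vtx m n) (a : ZMod m) (b : ZMod n) :
    xconf m n p ((a, b), true) =
      (if p = (a, b) then (-1 : ℤˣ) else 1) * (if p = (a, b - 1) then (-1 : ℤˣ) else 1) := by
  show (if (((a, b), true) : Edge m n) ∈ faceSet m n p then (-1 : ℤˣ) else 1) = _
  have hv : ((a, b) : Vtx m n) ≠ (a, b - 1) := by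
    intro h
    exact self_ne_sub_one hn b (congrArg Prod.snd h)
  rw [if_congr (mem_faceSet_true m n p a b) rfl rfl]
  by_cases h1 : p = (a, b) <;> by_cases h2 : p = (a, b - 1)
  · exact absurd (h1.symm.trans h2) hv
  · rw [if_pos (Or.inl h1), if_pos h1, if_neg h2, mul_one]
  · rw [if_pos (Or.inr h2), if_neg h1, if_pos h2, one_mul]
  · rw [if_neg (fun h => h.elim h1 h2), if_neg h1, if_neg h2, one_mul]

theorem xconf_false (hm : 3 ≤ m) (p : Vtx m n) (a : ZMod m) (b : ZMod n) :
    xconf m n p ((a, b), false) =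
      (if p = (a, b) then (-1 : ℤˣ) else 1) * (if p = (a - 1, b) then (-1 : ℤˣ) else 1) := by
  show (if (((a, b), false) : Edge m n) ∈ faceSet m n p then (-1 : ℤˣ) else 1) = _
  have hv : ((a, b) : Vtx m n) ≠ (a - 1, b) := by
    intro h
    exact self_ne_sub_one hm a (congrArg Prod.fst h)
  rw [if_congr (mem_faceSet_false m n p a b) rfl rfl]
  by_cases h1 : p = (a, b) <;> by_cases h2 : p = (a - 1, b)
  · exact absurd (h1.symm.trans h2) hv
  · rw [if_pos (Or.inl h1), if_pos h1, if_neg h2, mul_one]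
  · rw [if_pos (Or.inr h2), if_neg h1, if_pos h2, one_mul]
  · rw [if_neg (fun h => h.elim h1 h2), if_neg h1, if_neg h2, one_mul]

/-! ### The star product of `xconf` is 1 -/

theorem units_shuffle (a b c d : ℤˣ) : a * b * (a * c) * (c * d) * (b * d) = 1 := by
  rcases Int.units_eq_one_or a with rfl | rfl <;>
    rcases Int.units_eq_one_or b with rfl | rfl <;>
      rcases Int.units_eq_one_or c with rfl | rfl <;>
        rcases Int.units_eq_one_or d with rfl | rfl <;> decide

theorem star_injective (hm : 3 ≤ m) (hn : 3 ≤ n) (s : Vtx m n) :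
    Function.Injective (star m n s) := by
  have h1 : (s.1 : ZMod m) ≠ s.1 - 1 := self_ne_sub_one hm s.1
  have h2 : (s.2 : ZMod n) ≠ s.2 - 1 := self_ne_sub_one hn s.2
  have h1' : (s.1 - 1 : ZMod m) ≠ s.1 := h1.symm
  have h2' : (s.2 - 1 : ZMod n) ≠ s.2 := h2.symm
  intro i j hij
  fin_cases i <;> fin_cases j <;> simp_all [Toric.star, Prod.ext_iff]

theorem prod_star_xconf (hm : 3 ≤ m) (hn : 3 ≤ n) (p s : Vtx m n) :
    ∏ e ∈ starSet m n s, xconf m n p e = 1 := by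
  rw [starSet, Finset.prod_image (fun a _ b _ h => star_injective m n hm hn s h)]
  rw [Fin.prod_univ_four]
  have e0 : star m n s 0 = ((s.1, s.2), true) := rfl
  have e1 : star m n s 1 = ((s.1, s.2), false) := rfl
  have e2 : star m n s 2 = ((s.1 - 1, s.2), true) := rfl
  have e3 : star m n s 3 = ((s.1, s.2 - 1), false) := rfl
  rw [e0, e1, e2, e3, xconf_true m n hn p s.1 s.2, xconf_false m n hm p s.1 s.2,
    xconf_true m n hn p (s.1 - 1) s.2, xconf_false m n hm p s.1 (s.2 - 1)]
  exact units_shuffle _ _ _ _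

/-! ### Products of `xconf` over sets of faces -/

theorem xprod_true (hn : 3 ≤ n) (A : Finset (Vtx m n)) (a : ZMod m) (b : ZMod n) :
    (∏ p ∈ A, xconf m n p) ((a, b), true) =
      (if (a, b) ∈ A then (-1 : ℤˣ) else 1) * (if (a, b - 1) ∈ A then (-1 : ℤˣ) else 1) := by
  rw [Finset.prod_apply]
  rw [Finset.prod_congr rfl (fun p _ => xconf_true m n hn p a b)]
  rw [Finset.prod_mul_distrib, Finset.prod_ite_eq' A ((a, b) : Vtx m n) (fun _ => (-1 : ℤˣ)),
    Finset.prod_ite_eq' A ((a, b - 1) : Vtx m n) (fun _ => (-1 : ℤˣ))]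

theorem xprod_false (hm : 3 ≤ m) (A : Finset (Vtx m n)) (a : ZMod m) (b : ZMod n) :
    (∏ p ∈ A, xconf m n p) ((a, b), false) =
      (if (a, b) ∈ A then (-1 : ℤˣ) else 1) * (if (a - 1, b) ∈ A then (-1 : ℤˣ) else 1) := by
  rw [Finset.prod_apply]
  rw [Finset.prod_congr rfl (fun p _ => xconf_false m n hm p a b)]
  rw [Finset.prod_mul_distrib, Finset.prod_ite_eq' A ((a, b) : Vtx m n) (fun _ => (-1 : ℤˣ)),
    Finset.prod_ite_eq' A ((a - 1, b) : Vtx m n) (fun _ => (-1 : ℤˣ))]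

theorem xprod_sq (A : Finset (Vtx m n)) :
    (∏ p ∈ A, xconf m n p) * (∏ p ∈ A, xconf m n p) = 1 := by
  rw [← Finset.prod_mul_distrib]
  rw [Finset.prod_congr rfl (fun p _ => xconf_mul_self m n p)]
  exact Finset.prod_const_one

theorem xprod_symmDiff (C A : Finset (Vtx m n)) :
    (∏ p ∈ C, xconf m n p) * (∏ p ∈ A, xconf m n p) = ∏ p ∈ symmDiff C A, xconf m n p := by
  classical
  have hC : (∏ p ∈ C, xconf m n p) =
      (∏ p ∈ C \ A, xconf m n p) * ∏ p ∈ C ∩ A, xconf m n p := by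
    rw [← Finset.prod_union (Finset.disjoint_sdiff_inter C A), Finset.sdiff_union_inter]
  have hA : (∏ p ∈ A, xconf m n p) =
      (∏ p ∈ A \ C, xconf m n p) * ∏ p ∈ A ∩ C, xconf m n p := by
    rw [← Finset.prod_union (Finset.disjoint_sdiff_inter A C), Finset.sdiff_union_inter]
  rw [hC, hA, Finset.inter_comm A C, symmDiff_def, Finset.sup_eq_union,
    Finset.prod_union disjoint_sdiff_sdiff, mul_mul_mul_comm, xprod_sq, mul_one]

theorem xprod_eq_one_iff (hm : 3 ≤ m) (hn : 3 ≤ n) (A : Finset (Vtx m n)) :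
    (∏ p ∈ A, xconf m n p) = 1 ↔ A = ∅ ∨ A = Finset.univ := by
  constructor
  · intro h
    by_cases hA : A = ∅
    · exact Or.inl hA
    right
    have key2 : ∀ (a : ZMod m) (b : ZMod n), ((a, b) ∈ A ↔ (a, b - 1) ∈ A) := by
      intro a b
      have hx : (∏ p ∈ A, xconf m n p) ((a, b), true) = (1 : ℤˣ) := congrFun h _
      rw [xprod_true m n hn A a b] at hx
      constructor
      · intro hab
        by_contra hab'
        rw [if_pos hab, if_neg hab', mul_one] at hx
        exact absurd hx (by decide)
      · intro hab
        by_contra hab'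
        rw [if_neg hab', if_pos hab, one_mul] at hx
        exact absurd hx (by decide)
    have key1 : ∀ (a : ZMod m) (b : ZMod n), ((a, b) ∈ A ↔ (a - 1, b) ∈ A) := by
      intro a b
      have hx : (∏ p ∈ A, xconf m n p) ((a, b), false) = (1 : ℤˣ) := congrFun h _
      rw [xprod_false m n hm A a b] at hx
      constructor
      · intro hab
        by_contra hab'
        rw [if_pos hab, if_neg hab', mul_one] at hx
        exact absurd hx (by decide)
      · intro hab
        by_contra hab'
        rw [if_neg hab', if_pos hab, one_mul] at hx
        exact absurd hx (by decide)
    have stepR : ∀ (a : ZMod m) (b : ZMod n), (a, b) ∈ A → (a + 1, b) ∈ A := by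
      intro a b hab
      apply (key1 (a + 1) b).mpr
      rwa [add_sub_cancel_right]
    have stepU : ∀ (a : ZMod m) (b : ZMod n), (a, b) ∈ A → (a, b + 1) ∈ A := by
      intro a b hab
      apply (key2 a (b + 1)).mpr
      rwa [add_sub_cancel_right]
    have hR : ∀ (k : ℕ) (a : ZMod m) (b : ZMod n), (a, b) ∈ A → (a + (k : ZMod m), b) ∈ A := by
      intro k
      induction k with
      | zero => intro a b hab; simpa using hab
      | succ k ih =>
        intro a b hab
        have h2 := stepR _ _ (ih a b hab)
        have h3 : (a + (k : ZMod m) + 1 : ZMod m) = a + ((k + 1 : ℕ) : ZMod m) := by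
          push_cast; ring
        rwa [h3] at h2
    have hU : ∀ (k : ℕ) (a : ZMod m) (b : ZMod n), (a, b) ∈ A → (a, b + (k : ZMod n)) ∈ A := by
      intro k
      induction k with
      | zero => intro a b hab; simpa using hab
      | succ k ih =>
        intro a b hab
        have h2 := stepU _ _ (ih a b hab)
        have h3 : (b + (k : ZMod n) + 1 : ZMod n) = b + ((k + 1 : ℕ) : ZMod n) := by
          push_cast; ring
        rwa [h3] at h2
    obtain ⟨p0, hp0⟩ := Finset.nonempty_of_ne_empty hA
    apply Finset.eq_univ_of_forall
    intro q
    have hmem : (p0.1 + (((q.1 - p0.1).val : ℕ) : ZMod m),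
        p0.2 + (((q.2 - p0.2).val : ℕ) : ZMod n)) ∈ A :=
      hU _ _ _ (hR _ _ _ hp0)
    have e1 : p0.1 + (((q.1 - p0.1).val : ℕ) : ZMod m) = q.1 := by
      rw [ZMod.natCast_rightInverse (q.1 - p0.1)]; ring
    have e2 : p0.2 + (((q.2 - p0.2).val : ℕ) : ZMod n) = q.2 := by
      rw [ZMod.natCast_rightInverse (q.2 - p0.2)]; ring
    rwa [e1, e2] at hmem
  · rintro (rfl | rfl)
    · simp
    · funext e
      obtain ⟨⟨a, b⟩, bb⟩ := e
      cases bb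
      · rw [xprod_false m n hm Finset.univ a b]
        simp
      · rw [xprod_true m n hn Finset.univ a b]
        simp

theorem xprod_mul_eq_one_iff (hm : 3 ≤ m) (hn : 3 ≤ n) (C A : Finset (Vtx m n)) :
    (∏ p ∈ C, xconf m n p) * (∏ p ∈ A, xconf m n p) = 1 ↔ (A = C ∨ A = Cᶜ) := by
  rw [xprod_symmDiff, xprod_eq_one_iff m n hm hn]
  constructor
  · rintro (h | h)
    · left
      exact (symmDiff_eq_bot.mp h).symm
    · right
      have hc : IsCompl C A := (symmDiff_eq_top C A).mp h
      exact hc.compl_eq.symm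
  · rintro (rfl | rfl)
    · left
      exact symmDiff_eq_bot.mpr rfl
    · right
      exact (symmDiff_eq_top C Cᶜ).mpr isCompl_compl


/-! ### Commutation of the `X`-part and the `Z`-part -/

theorem commute_Pmat_Z (hm : 3 ≤ m) (hn : 3 ≤ n) (p s : Vtx m n) :
    Commute (Pmat m n (xconf m n p)) (Z m n s) := by
  apply Pmat_diag_comm
  intro ω
  have h : (∏ e ∈ starSet m n s, (xconf m n p * ω) e) = ∏ e ∈ starSet m n s, ω e := by
    have h1 : ∀ e ∈ starSet m n s, (xconf m n p * ω) e = xconf m n p e * ω e :=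
      fun e _ => rfl
    rw [Finset.prod_congr rfl h1, Finset.prod_mul_distrib,
      prod_star_xconf m n hm hn p s, one_mul]
  rw [h]

/-! ### Expansion of the exponential of the `X`-part -/

theorem insert_sdiff_insert'' {α : Type*} [DecidableEq α] {a : α} {s A : Finset α}
    (ha : a ∉ s) : insert a s \ insert a A = s \ A := by
  ext x
  simp only [Finset.mem_sdiff, Finset.mem_insert, not_or]
  constructor
  · rintro ⟨hx1, hx2, hx3⟩
    rcases hx1 with rfl | hx1
    · exact absurd rfl hx2
    · exact ⟨hx1, hx3⟩
  · rintro ⟨hx1, hx2⟩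
    exact ⟨Or.inr hx1, fun h => ha (h ▸ hx1), hx2⟩

theorem exp_sum_Pmat (J : Vtx m n → ℝ) (s : Finset (Vtx m n)) :
    NormedSpace.exp (∑ p ∈ s, J p • Pmat m n (xconf m n p)) =
      ∑ A ∈ s.powerset,
        ((∏ p ∈ A, Real.sinh (J p)) * ∏ p ∈ s \ A, Real.cosh (J p)) •
          Pmat m n (∏ p ∈ A, xconf m n p) := by
  classical
  induction s using Finset.induction_on with
  | empty =>
    rw [Finset.sum_empty, NormedSpace.exp_zero, Finset.powerset_empty, Finset.sum_singleton]
    simp [Pmat_one]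
  | @insert a s ha ih =>
    have hcomm : Commute (J a • Pmat m n (xconf m n a))
        (∑ p ∈ s, J p • Pmat m n (xconf m n p)) := by
      apply Commute.sum_right
      intro p _
      exact commute_smul_of_commute (Pmat_commute m n _ _) _ _
    rw [Finset.sum_insert ha, Matrix.exp_add_of_commute _ _ hcomm,
      exp_invol _ (Pmat_sq m n _ (xconf_mul_self m n a)) (J a), ih]
    have hdisj : Disjoint s.powerset (s.powerset.image (insert a)) := by
      rw [Finset.disjoint_left]
      intro A hA hA'
      rw [Finset.mem_powerset] at hA
      obtain ⟨B, _, rfl⟩ := Finset.mem_image.mp hA'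
      exact ha (hA (Finset.mem_insert_self a B))
    have himg : ∀ B ∈ s.powerset, ∀ B' ∈ s.powerset,
        insert a B = insert a B' → B = B' := by
      intro B hB B' hB' hEq
      rw [Finset.mem_powerset] at hB hB'
      have h1 : (insert a B).erase a = (insert a B').erase a := by rw [hEq]
      rwa [Finset.erase_insert (fun h => ha (hB h)),
        Finset.erase_insert (fun h => ha (hB' h))] at h1
    rw [Finset.powerset_insert, Finset.sum_union hdisj, Finset.sum_image himg,
      add_mul, Finset.mul_sum, Finset.mul_sum]
    congr 1
    · apply Finset.sum_congr rfl
      intro A hA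
      rw [Finset.mem_powerset] at hA
      have haA : a ∉ A := fun h => ha (hA h)
      have haSA : a ∉ s \ A := fun h => ha (Finset.mem_sdiff.mp h).1
      rw [Finset.insert_sdiff_of_notMem s haA, Finset.prod_insert haSA]
      rw [Matrix.smul_mul, one_mul, smul_smul]
      congr 1
      ring
    · apply Finset.sum_congr rfl
      intro A hA
      rw [Finset.mem_powerset] at hA
      have haA : a ∉ A := fun h => ha (hA h)
      rw [Finset.prod_insert haA, Finset.prod_insert haA, insert_sdiff_insert'' ha]
      rw [Matrix.smul_mul, Matrix.mul_smul, smul_smul, Pmat_mul]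
      congr 1
      ring

/-! ### The trace formula -/

theorem ite_or_add {x : ℝ} {a b : Prop} [Decidable a] [Decidable b] (hab : ¬(a ∧ b)) :
    (if a ∨ b then x else 0) = (if a then x else 0) + (if b then x else 0) := by
  by_cases ha : a
  · rw [if_pos (Or.inl ha), if_pos ha, if_neg (fun hb => hab ⟨ha, hb⟩), add_zero]
  · by_cases hb : b
    · rw [if_pos (Or.inr hb), if_neg ha, if_pos hb, zero_add]
    · rw [if_neg (fun h => h.elim ha hb), if_neg ha, if_neg hb, add_zero]

theorem trace_XProd_mexp (hm : 3 ≤ m) (hn : 3 ≤ n) (Jx Jz : Vtx m n → ℝ)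
    (C : Finset (Vtx m n)) :
    (XProd m n C * mexp m n (-H m n Jx Jz)).trace =
      ((∏ p ∈ C, Real.sinh (Jx p)) * ∏ p ∈ Cᶜ, Real.cosh (Jx p) +
        (∏ p ∈ Cᶜ, Real.sinh (Jx p)) * ∏ p ∈ C, Real.cosh (Jx p)) *
      ∑ τ : SConf m n,
        Real.exp (∑ s : Vtx m n, Jz s * (((∏ e ∈ starSet m n s, τ e : ℤˣ) : ℤ) : ℝ)) := by
  classical
  set D : SConf m n → ℝ :=
    fun τ => ∑ s : Vtx m n, Jz s * (((∏ e ∈ starSet m n s, τ e : ℤˣ) : ℤ) : ℝ) with hD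
  -- Step 1: -H = Gx + Gz
  have hH : -H m n Jx Jz =
      (∑ p : Vtx m n, Jx p • Pmat m n (xconf m n p)) + (∑ s : Vtx m n, Jz s • Z m n s) := by
    show -((-∑ p : Vtx m n, Jx p • Pmat m n (xconf m n p)) - ∑ s : Vtx m n, Jz s • Z m n s) = _
    rw [neg_sub, sub_neg_eq_add, add_comm]
  -- Step 2: Gz is diagonal
  have hGz : (∑ s : Vtx m n, Jz s • Z m n s) = Matrix.diagonal D := by
    ext τ ω
    rw [Matrix.sum_apply]
    by_cases h : τ = ω
    · subst h
      rw [Matrix.diagonal_apply_eq, hD]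
      apply Finset.sum_congr rfl
      intro s _
      rw [Matrix.smul_apply, Z, Matrix.diagonal_apply_eq, smul_eq_mul]
    · rw [Matrix.diagonal_apply_ne _ h]
      apply Finset.sum_eq_zero
      intro s _
      rw [Matrix.smul_apply, Z, Matrix.diagonal_apply_ne _ h, smul_eq_mul, mul_zero]
  -- Step 3: commutation
  have hcomm : Commute (∑ p : Vtx m n, Jx p • Pmat m n (xconf m n p))
      (∑ s : Vtx m n, Jz s • Z m n s) := by
    apply Commute.sum_left
    intro p _
    apply Commute.sum_right
    intro s _
    exact commute_smul_of_commute (commute_Pmat_Z m n hm hn p s) _ _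
  -- Step 4: the exponential of the diagonal part
  have hExpGz : NormedSpace.exp (Matrix.diagonal D) =
      Matrix.diagonal (fun τ => Real.exp (D τ)) := by
    rw [Matrix.exp_diagonal D, Pi.exp_def D, ← Real.exp_eq_exp_ℝ]
  -- Step 5: expand
  have hC : C ∈ (Finset.univ : Finset (Vtx m n)).powerset :=
    Finset.mem_powerset.mpr (Finset.subset_univ C)
  have hCc : Cᶜ ∈ (Finset.univ : Finset (Vtx m n)).powerset :=
    Finset.mem_powerset.mpr (Finset.subset_univ Cᶜ)
  have hCne : C ≠ Cᶜ := by
    intro h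
    by_cases hq : ((0, 0) : Vtx m n) ∈ C
    · have h2 := hq
      rw [h] at h2
      exact (Finset.mem_compl.mp h2) hq
    · have h2 : ((0, 0) : Vtx m n) ∈ Cᶜ := Finset.mem_compl.mpr hq
      rw [← h] at h2
      exact hq h2
  rw [XProd_eq_Pmat, mexp, hH, Matrix.exp_add_of_commute _ _ hcomm, hGz, hExpGz,
    exp_sum_Pmat, Finset.sum_mul, Finset.mul_sum, Matrix.trace_sum]
  have hterm : ∀ A ∈ (Finset.univ : Finset (Vtx m n)).powerset,
      (Pmat m n (∏ p ∈ C, xconf m n p) *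
        ((((∏ p ∈ A, Real.sinh (Jx p)) * ∏ p ∈ Finset.univ \ A, Real.cosh (Jx p)) •
          Pmat m n (∏ p ∈ A, xconf m n p)) *
            Matrix.diagonal (fun τ => Real.exp (D τ)))).trace =
      (if A = C then ((∏ p ∈ A, Real.sinh (Jx p)) *
          ∏ p ∈ Finset.univ \ A, Real.cosh (Jx p)) * ∑ τ : SConf m n, Real.exp (D τ) else 0) +
      (if A = Cᶜ then ((∏ p ∈ A, Real.sinh (Jx p)) *
          ∏ p ∈ Finset.univ \ A, Real.cosh (Jx p)) * ∑ τ : SConf m n, Real.exp (D τ) else 0) := by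
    intro A _
    rw [Matrix.smul_mul, Matrix.mul_smul, Matrix.trace_smul, ← mul_assoc, Pmat_mul,
      trace_Pmat_diagonal, smul_eq_mul]
    rw [if_congr (xprod_mul_eq_one_iff m n hm hn C A) rfl rfl]
    rw [mul_ite, mul_zero]
    exact ite_or_add (fun h => hCne (h.1.symm.trans h.2))
  rw [Finset.sum_congr rfl hterm, Finset.sum_add_distrib,
    Finset.sum_ite_eq' _ C _, Finset.sum_ite_eq' _ Cᶜ _, if_pos hC, if_pos hCc]
  rw [← Finset.compl_eq_univ_sdiff, ← Finset.compl_eq_univ_sdiff, compl_compl]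
  ring

end ToricCodeAux

/-- For `C ⊆ F`,
`⟨∏_{p∈C} X_p⟩ = (∏_{p∉C} cosh(Jˣ_p) ∏_{p∈C} sinh(Jˣ_p) + ∏_{p∉C} sinh(Jˣ_p)
∏_{p∈C} cosh(Jˣ_p)) / (∏_p cosh(Jˣ_p) + ∏_p sinh(Jˣ_p))`; in particular it is
nonnegative. -/
theorem toric_code_X_correlation (m n : ℕ) [NeZero m] [NeZero n]
    (hm : 3 ≤ m) (hn : 3 ≤ n)
    (Jx Jz : Toric.Vtx m n → ℝ) (hJx : ∀ p, 0 ≤ Jx p) (hJz : ∀ s, 0 ≤ Jz s)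
    (C : Finset (Toric.Vtx m n)) :
    Toric.gibbs m n Jx Jz (Toric.XProd m n C) =
      ((∏ p ∈ Cᶜ, Real.cosh (Jx p)) * (∏ p ∈ C, Real.sinh (Jx p)) +
        (∏ p ∈ Cᶜ, Real.sinh (Jx p)) * (∏ p ∈ C, Real.cosh (Jx p))) /
      ((∏ p : Toric.Vtx m n, Real.cosh (Jx p)) +
        ∏ p : Toric.Vtx m n, Real.sinh (Jx p)) ∧
    0 ≤ Toric.gibbs m n Jx Jz (Toric.XProd m n C) := by
  classical
  haveI : Nonempty (Toric.SConf m n) := ⟨fun _ => 1⟩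
  have hSpos : 0 < ∑ τ : Toric.SConf m n,
      Real.exp (∑ s : Toric.Vtx m n,
        Jz s * (((∏ e ∈ Toric.starSet m n s, τ e : ℤˣ) : ℤ) : ℝ)) :=
    Finset.sum_pos (fun τ _ => Real.exp_pos _) Finset.univ_nonempty
  have hNum := ToricCodeAux.trace_XProd_mexp m n hm hn Jx Jz C
  have hDen0 := ToricCodeAux.trace_XProd_mexp m n hm hn Jx Jz ∅
  have hXe : Toric.XProd m n (∅ : Finset (Toric.Vtx m n)) = (1 : Toric.Mat m n) := by
    rw [ToricCodeAux.XProd_eq_Pmat, Finset.prod_empty, ToricCodeAux.Pmat_one]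
  rw [hXe, one_mul, Finset.prod_empty, Finset.prod_empty, Finset.compl_empty,
    one_mul, mul_one] at hDen0
  have hG : Toric.gibbs m n Jx Jz (Toric.XProd m n C) =
      ((∏ p ∈ Cᶜ, Real.cosh (Jx p)) * (∏ p ∈ C, Real.sinh (Jx p)) +
        (∏ p ∈ Cᶜ, Real.sinh (Jx p)) * (∏ p ∈ C, Real.cosh (Jx p))) /
      ((∏ p : Toric.Vtx m n, Real.cosh (Jx p)) +
        ∏ p : Toric.Vtx m n, Real.sinh (Jx p)) := by
    rw [Toric.gibbs, hNum, hDen0, mul_div_mul_right _ _ (ne_of_gt hSpos)]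
    congr 1
    ring
  have hsinh : ∀ p, 0 ≤ Real.sinh (Jx p) := fun p => Real.sinh_nonneg_iff.mpr (hJx p)
  have hcosh : ∀ p : Toric.Vtx m n, 0 ≤ Real.cosh (Jx p) := fun p => (Real.cosh_pos (Jx p)).le
  refine ⟨hG, ?_⟩
  rw [hG]
  apply div_nonneg
  · apply add_nonneg
    · exact mul_nonneg (Finset.prod_nonneg fun p _ => hcosh p)
        (Finset.prod_nonneg fun p _ => hsinh p)
    · exact mul_nonneg (Finset.prod_nonneg fun p _ => hsinh p)
        (Finset.prod_nonneg fun p _ => hcosh p)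
  · exact add_nonneg (Finset.prod_nonneg fun p _ => hcosh p)
      (Finset.prod_nonneg fun p _ => hsinh p)
end

section
/- Let m,n ≥ 3, let Λ be the m×n torus lattice, and let J^x = (J^x_p ≥ 0 : p ∈ F), J^z = (J^z_s ≥ 0 : s ∈ V) be nonnegative couplings. Let A ⊆ E and set X_A = ∏_{e∈A} σ⁽¹⁾_e. If there is no subset C ⊆ F such that A equals the symmetric difference △_{p∈C} {e ∈ E : e ∼ p} (equivalently, no C ⊆ F with X_A = ∏_{p∈C} X_p), then the toric code equilibrium state satisfies ⟨X_A⟩ = 0. -/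
open scoped BigOperators

section Aux

open Toric Finset

variable (m n : ℕ)

/-- The `ZMod 2` indicator vector of a finset of edges. -/
private def tcVec (A : Finset (Edge m n)) : Edge m n → ZMod 2 :=
  fun e => if e ∈ A then 1 else 0

private def tcSgn : ZMod 2 → ℤˣ := fun x => if x = 0 then 1 else -1

private lemma tcSgn_add : ∀ x y : ZMod 2, tcSgn (x + y) = tcSgn x * tcSgn y := by decide

private lemma tcSgn_sum {ι : Type} (C : Finset ι) (f : ι → ZMod 2) :
    tcSgn (∑ p ∈ C, f p) = ∏ p ∈ C, tcSgn (f p) := by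
  classical
  induction C using Finset.cons_induction with
  | empty => rfl
  | cons a s ha ih => rw [Finset.sum_cons, Finset.prod_cons, tcSgn_add, ih]

private lemma tc_aconf_eq (A : Finset (Edge m n)) (e : Edge m n) :
    aconf m n A e = tcSgn (tcVec m n A e) := by
  unfold aconf tcVec tcSgn
  by_cases hA : e ∈ A <;> simp [hA]

private lemma tc_xconf_eq (p : Vtx m n) (e : Edge m n) :
    xconf m n p e = tcSgn (tcVec m n (faceSet m n p) e) := by
  unfold xconf tcVec tcSgn
  by_cases hA : e ∈ faceSet m n p <;> simp [hA]

private lemma tc_key [NeZero m] [NeZero n] (A : Finset (Edge m n))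
    (h : ¬∃ C : Finset (Vtx m n), aconf m n A = ∏ p ∈ C, xconf m n p) :
    ∃ B : Finset (Edge m n),
      Odd (A ∩ B).card ∧ ∀ p : Vtx m n, Even (faceSet m n p ∩ B).card := by
  classical
  set W : Submodule (ZMod 2) (Edge m n → ZMod 2) :=
    Submodule.span (ZMod 2) (Set.range fun p : Vtx m n => tcVec m n (faceSet m n p)) with hW
  have hx01 : ∀ x : ZMod 2, x = 0 ∨ x = 1 := by decide
  -- the vector of `A` is not in the span of face vectors
  have hnot : tcVec m n A ∉ W := by
    intro hmem
    rw [hW, Submodule.mem_span_range_iff_exists_fun] at hmem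
    obtain ⟨c, hc⟩ := hmem
    apply h
    refine ⟨Finset.univ.filter fun p => c p = 1, ?_⟩
    have hsum : tcVec m n A
        = ∑ p ∈ Finset.univ.filter (fun p => c p = 1), tcVec m n (faceSet m n p) := by
      rw [← hc, Finset.sum_filter]
      refine Finset.sum_congr rfl fun p _ => ?_
      rcases hx01 (c p) with h0 | h1
      · simp [h0]
      · simp [h1]
    funext e
    rw [tc_aconf_eq, Finset.prod_apply, hsum, Finset.sum_apply, tcSgn_sum]
    exact Finset.prod_congr rfl fun p _ => (tc_xconf_eq m n p e).symm
  -- a dual functional separating `A` from the span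
  have hq : W.mkQ (tcVec m n A) ≠ 0 := by
    rw [Submodule.mkQ_apply, Ne, Submodule.Quotient.mk_eq_zero]
    exact hnot
  obtain ⟨φ₀, hφ₀⟩ :
      ∃ φ₀ : Module.Dual (ZMod 2) ((Edge m n → ZMod 2) ⧸ W),
        φ₀ (W.mkQ (tcVec m n A)) ≠ 0 := by
    by_contra hc
    push_neg at hc
    exact hq ((Module.forall_dual_apply_eq_zero_iff (ZMod 2) _).1 hc)
  set φ : (Edge m n → ZMod 2) →ₗ[ZMod 2] ZMod 2 := φ₀.comp W.mkQ with hφdef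
  have hφW : ∀ w ∈ W, φ w = 0 := by
    intro w hw
    have : W.mkQ w = 0 := (Submodule.Quotient.mk_eq_zero W).2 hw
    simp [hφdef, LinearMap.comp_apply, this]
  set B : Finset (Edge m n) :=
    Finset.univ.filter (fun e => φ (Pi.single e 1) = 1) with hB
  -- evaluation of φ on indicator vectors counts intersections with B
  have heval : ∀ v : Edge m n → ZMod 2, φ v = ∑ e, v e * φ (Pi.single e 1) := by
    intro v
    have hv : v = ∑ e : Edge m n, v e • Pi.single e (1 : ZMod 2) := by
      funext x
      simp [Finset.sum_apply, Pi.single_apply]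
    conv_lhs => rw [hv]
    rw [map_sum]
    exact Finset.sum_congr rfl fun e _ => by rw [map_smul, smul_eq_mul]
  have hcard : ∀ S : Finset (Edge m n), φ (tcVec m n S) = ((S ∩ B).card : ZMod 2) := by
    intro S
    rw [heval]
    have h1 : ∀ e : Edge m n,
        tcVec m n S e * φ (Pi.single e 1) = if e ∈ S ∩ B then 1 else 0 := by
      intro e
      have hne : ∀ x : ZMod 2, x ≠ 1 → x = 0 := by decide
      by_cases hS : e ∈ S <;> by_cases hBe : e ∈ B
      · have : φ (Pi.single e 1) = 1 := by
          have := hBe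
          rw [hB, Finset.mem_filter] at this
          exact this.2
        simp [tcVec, hS, hBe, this]
      · have hnot1 : φ (Pi.single e 1) ≠ 1 := fun hc =>
          hBe (by rw [hB, Finset.mem_filter]; exact ⟨Finset.mem_univ e, hc⟩)
        simp [tcVec, hS, hBe, hne _ hnot1]
      · simp [tcVec, hS]
      · simp [tcVec, hS]
    rw [Finset.sum_congr rfl fun e _ => h1 e]
    rw [Finset.sum_ite_mem, Finset.univ_inter, Finset.sum_const, nsmul_eq_mul, mul_one]
  refine ⟨B, ?_, ?_⟩
  · have hA : φ (tcVec m n A) ≠ 0 := hφ₀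
    rw [hcard] at hA
    rw [Nat.not_even_iff_odd.symm, even_iff_two_dvd]
    intro hdvd
    exact hA ((ZMod.natCast_eq_zero_iff _ 2).2 hdvd)
  · intro p
    have hp : φ (tcVec m n (faceSet m n p)) = 0 :=
      hφW _ (Submodule.subset_span ⟨p, rfl⟩)
    rw [hcard] at hp
    rw [even_iff_two_dvd]
    exact (ZMod.natCast_eq_zero_iff _ 2).1 hp

private lemma tc_prod_sign (B S : Finset (Edge m n)) :
    (∏ e ∈ B, if e ∈ S then (-1 : ℤˣ) else 1) = (-1) ^ (B ∩ S).card := by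
  classical
  rw [Finset.prod_ite_mem, Finset.prod_const]

end Aux

/-- If `X_A = ∏_{e∈A} σ¹_e` is not a product of plaquette
operators (no `C ⊆ F` with `X_A = ∏_{p∈C} X_p`), then `⟨X_A⟩ = 0`. -/
theorem toric_code_XA_vanishes (m n : ℕ) [NeZero m] [NeZero n]
    (hm : 3 ≤ m) (hn : 3 ≤ n)
    (Jx Jz : Toric.Vtx m n → ℝ) (hJx : ∀ p, 0 ≤ Jx p) (hJz : ∀ s, 0 ≤ Jz s)
    (A : Finset (Toric.Edge m n))
    (h : ¬∃ C : Finset (Toric.Vtx m n), Toric.XA m n A = Toric.XProd m n C) :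
    Toric.gibbs m n Jx Jz (Toric.XA m n A) = 0 := by
  classical
  -- obtain the separating edge set B
  obtain ⟨B, hodd, heven⟩ := tc_key m n A (by
    rintro ⟨C, hC⟩
    exact h ⟨C, by unfold Toric.XA Toric.XProd; rw [hC]⟩)
  -- the diagonal sign matrix D
  set fv : Toric.SConf m n → ℝ :=
    fun ω => (((∏ e ∈ B, ω e : ℤˣ) : ℤ) : ℝ) with hfvdef
  set D : Toric.Mat m n := Matrix.diagonal fv with hDdef
  have hsplit : ∀ c ω : Toric.SConf m n,
      fv (c * ω) = (((∏ e ∈ B, c e : ℤˣ) : ℤ) : ℝ) * fv ω := by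
    intro c ω
    simp only [hfvdef, Pi.mul_apply, Finset.prod_mul_distrib, Units.val_mul, Int.cast_mul]
  have sA : (∏ e ∈ B, Toric.aconf m n A e) = (-1 : ℤˣ) := by
    unfold Toric.aconf
    rw [tc_prod_sign]
    rw [Finset.inter_comm] at hodd
    exact hodd.neg_one_pow
  have sF : ∀ p : Toric.Vtx m n, (∏ e ∈ B, Toric.xconf m n p e) = (1 : ℤˣ) := by
    intro p
    unfold Toric.xconf
    rw [tc_prod_sign]
    have := heven p
    rw [Finset.inter_comm] at this
    exact this.neg_one_pow
  have fvA : ∀ ω, fv (Toric.aconf m n A * ω) = -fv ω := by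
    intro ω; rw [hsplit, sA]; push_cast; ring
  have fvP : ∀ (p : Toric.Vtx m n) ω, fv (Toric.xconf m n p * ω) = fv ω := by
    intro p ω; rw [hsplit, sF]; push_cast; ring
  have fvsq : ∀ ω, fv ω * fv ω = 1 := by
    intro ω
    rw [hfvdef]
    rw [← Int.cast_mul, ← Units.val_mul, Int.units_mul_self, Units.val_one, Int.cast_one]
  -- main matrix identities
  have hD2 : D * D = 1 := by
    rw [hDdef, Matrix.diagonal_mul_diagonal]
    rw [show (fun i => fv i * fv i) = fun _ => (1 : ℝ) from funext fvsq, Matrix.diagonal_one]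
  have hDX : D * Toric.XA m n A = -(Toric.XA m n A * D) := by
    ext τ ω
    rw [Matrix.neg_apply, hDdef, Matrix.diagonal_mul, Matrix.mul_diagonal]
    unfold Toric.XA
    split_ifs with hτ
    · subst hτ
      rw [fvA]; ring
    · ring
  have hXp : ∀ p, Commute D (Toric.X m n p) := by
    intro p
    show D * Toric.X m n p = Toric.X m n p * D
    ext τ ω
    rw [hDdef, Matrix.diagonal_mul, Matrix.mul_diagonal]
    unfold Toric.X
    split_ifs with hτ
    · subst hτ
      rw [fvP]; ring
    · ring
  have hZs : ∀ s, Commute D (Toric.Z m n s) := by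
    intro s
    show D * Toric.Z m n s = Toric.Z m n s * D
    rw [hDdef]
    unfold Toric.Z
    rw [Matrix.diagonal_mul_diagonal, Matrix.diagonal_mul_diagonal]
    exact congrArg Matrix.diagonal (funext fun ω => mul_comm _ _)
  have hcomm : Commute D (-Toric.H m n Jx Jz) := by
    unfold Toric.H
    refine Commute.neg_right (Commute.sub_right (Commute.neg_right ?_) ?_)
    · exact Finset.sum_induction _ _ (fun a b => Commute.add_right) (Commute.zero_right D)
        fun p _ => (hXp p).smul_right (Jx p)
    · exact Finset.sum_induction _ _ (fun a b => Commute.add_right) (Commute.zero_right D)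
        fun s _ => (hZs s).smul_right (Jz s)
  have hDE : D * Toric.mexp m n (-Toric.H m n Jx Jz)
      = Toric.mexp m n (-Toric.H m n Jx Jz) * D := by
    have := hcomm.exp_right.eq
    unfold Toric.mexp
    exact this
  set XAm := Toric.XA m n A with hXAm
  set E := Toric.mexp m n (-Toric.H m n Jx Jz) with hE
  have h1 : D * (XAm * E) * D = -(XAm * E) := by
    calc D * (XAm * E) * D = (D * XAm) * E * D := by noncomm_ring
      _ = (-(XAm * D)) * E * D := by rw [hDX]
      _ = -(XAm * (D * E) * D) := by noncomm_ring
      _ = -(XAm * (E * D) * D) := by rw [hDE]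
      _ = -(XAm * E * (D * D)) := by noncomm_ring
      _ = -(XAm * E) := by rw [hD2, mul_one]
  have h2 : (D * (XAm * E) * D).trace = (XAm * E).trace := by
    rw [Matrix.trace_mul_comm, ← mul_assoc, hD2, one_mul]
  have key : (XAm * E).trace = 0 := by
    rw [h1, Matrix.trace_neg] at h2
    linarith
  unfold Toric.gibbs
  rw [key, zero_div]
end
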